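/- arXiv:1910.06798 — 3 statements merged into one kernel-verified Lean document; each statement's English description precedes it below -/
import Mathlib

section
/- If u : ℝ → ℝ is the value function of some two-player zero-sum polynomial game, then u is continuous and piecewise rational. -/
open Polynomial

/-- The value of a finite two-player zero-sum matrix game with payoff matrix `G`:
`sup` over mixed strategies of Player 1 of `inf` over mixed strategies of Player 2
of the expected payoff. -/
noncomputable def matrixValue {A B : Type} [Fintype A] [Fintype B] (G : A → B → ℝ) : ℝ :=
  ⨆ x : stdSimplex ℝ A, ⨅ y : stdSimplex ℝ B, ∑ a : A, ∑ b : B, x.1 a * G a b * y.1 b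

/-- `u ∈ 𝒱`: `u` is the value function of some two-player zero-sum polynomial game,
i.e. there are finite nonempty strategy sets `A`, `B` and a matrix `G` of real polynomials
such that `u z` is the value of the matrix game `G` evaluated at `z`, for every `z`. -/
def InV (u : ℝ → ℝ) : Prop :=
  ∃ (A B : Type) (iA : Fintype A) (iB : Fintype B), Nonempty A ∧ Nonempty B ∧
    ∃ G : A → B → Polynomial ℝ,
      ∀ z : ℝ, u z = @matrixValue A B iA iB fun a b => (G a b).eval z

/-- `u` is piecewise rational: there are `K + 2` points
`⊥ = h 0 < h 1 < ⋯ < h (K+1) = ⊤` (the interior ones being real) and rational functions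
`Q k / R k` with `R k` nonvanishing on `(h k, h (k+1))`, such that `u = Q k / R k` there. -/
def PiecewiseRational (u : ℝ → ℝ) : Prop :=
  ∃ (K : ℕ) (h : Fin (K + 2) → EReal) (Q R : Fin (K + 1) → Polynomial ℝ),
    StrictMono h ∧ h 0 = ⊥ ∧ h (Fin.last (K + 1)) = ⊤ ∧
    ∀ (k : Fin (K + 1)) (z : ℝ), h k.castSucc < (z : EReal) → (z : EReal) < h k.succ →
      (R k).eval z ≠ 0 ∧ u z = (Q k).eval z / (R k).eval z

section cmp
lemma ciInf_diff_le {α : Type} [Nonempty α] (f f' : α → ℝ)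
    (hb : BddBelow (Set.range f)) (hb' : BddBelow (Set.range f')) {ε : ℝ}
    (h : ∀ x, |f x - f' x| ≤ ε) : |(⨅ x, f x) - ⨅ x, f' x| ≤ ε := by
  have h1 : (⨅ x, f' x) - ε ≤ ⨅ x, f x :=
    le_ciInf fun x => by have := ciInf_le hb' x; have := abs_le.1 (h x); linarith
  have h2 : (⨅ x, f x) - ε ≤ ⨅ x, f' x :=
    le_ciInf fun x => by have := ciInf_le hb x; have := abs_le.1 (h x); linarith
  rw [abs_le]; constructor <;> linarith

lemma ciSup_diff_le {α : Type} [Nonempty α] (f f' : α → ℝ)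
    (hb : BddAbove (Set.range f)) (hb' : BddAbove (Set.range f')) {ε : ℝ}
    (h : ∀ x, |f x - f' x| ≤ ε) : |(⨆ x, f x) - ⨆ x, f' x| ≤ ε := by
  have h1 : (⨆ x, f x) ≤ (⨆ x, f' x) + ε :=
    ciSup_le fun x => by have := le_ciSup hb' x; have := abs_le.1 (h x); linarith
  have h2 : (⨆ x, f' x) ≤ (⨆ x, f x) + ε :=
    ciSup_le fun x => by have := le_ciSup hb x; have := abs_le.1 (h x); linarith
  rw [abs_le]; constructor <;> linarith
end cmp

section pay
variable {A B : Type} [Fintype A] [Fintype B]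

lemma simplex_coord_le_one {x : A → ℝ} (hx : x ∈ stdSimplex ℝ A) (a : A) : x a ≤ 1 := by
  rw [← hx.2]
  exact Finset.single_le_sum (fun a' _ => hx.1 a') (Finset.mem_univ a)

lemma pay_abs_le (g : A → B → ℝ) {x : A → ℝ} {y : B → ℝ}
    (hx : x ∈ stdSimplex ℝ A) (hy : y ∈ stdSimplex ℝ B) :
    |∑ a : A, ∑ b : B, x a * g a b * y b| ≤ ∑ a : A, ∑ b : B, |g a b| := by
  calc |∑ a : A, ∑ b : B, x a * g a b * y b|
      ≤ ∑ a : A, |∑ b : B, x a * g a b * y b| := Finset.abs_sum_le_sum_abs _ _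
    _ ≤ ∑ a : A, ∑ b : B, |x a * g a b * y b| :=
        Finset.sum_le_sum fun a _ => Finset.abs_sum_le_sum_abs _ _
    _ ≤ ∑ a : A, ∑ b : B, |g a b| := by
        refine Finset.sum_le_sum fun a _ => Finset.sum_le_sum fun b _ => ?_
        rw [abs_mul, abs_mul, abs_of_nonneg (hx.1 a), abs_of_nonneg (hy.1 b)]
        have e1 : x a * |g a b| * y b ≤ 1 * |g a b| * 1 :=
          mul_le_mul (mul_le_mul (simplex_coord_le_one hx a) le_rfl (abs_nonneg _) zero_le_one)
            (simplex_coord_le_one hy b) (hy.1 b) (by positivity)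
        exact le_trans e1 (by rw [one_mul, mul_one])

lemma pay_diff_le (g g' : A → B → ℝ) {x : A → ℝ} {y : B → ℝ} {ε : ℝ}
    (hx : x ∈ stdSimplex ℝ A) (hy : y ∈ stdSimplex ℝ B)
    (h : ∀ a b, |g a b - g' a b| ≤ ε) :
    |(∑ a : A, ∑ b : B, x a * g a b * y b) - ∑ a : A, ∑ b : B, x a * g' a b * y b| ≤ ε := by
  have hd : (∑ a : A, ∑ b : B, x a * g a b * y b) - (∑ a : A, ∑ b : B, x a * g' a b * y b)
      = ∑ a : A, ∑ b : B, x a * (g a b - g' a b) * y b := by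
    rw [← Finset.sum_sub_distrib]
    exact Finset.sum_congr rfl fun a _ => by
      rw [← Finset.sum_sub_distrib]
      exact Finset.sum_congr rfl fun b _ => by ring
  rw [hd]
  calc |∑ a : A, ∑ b : B, x a * (g a b - g' a b) * y b|
      ≤ ∑ a : A, |∑ b : B, x a * (g a b - g' a b) * y b| := Finset.abs_sum_le_sum_abs _ _
    _ ≤ ∑ a : A, ∑ b : B, |x a * (g a b - g' a b) * y b| :=
        Finset.sum_le_sum fun a _ => Finset.abs_sum_le_sum_abs _ _
    _ ≤ ∑ a : A, ∑ b : B, x a * ε * y b := by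
        refine Finset.sum_le_sum fun a _ => Finset.sum_le_sum fun b _ => ?_
        rw [abs_mul, abs_mul, abs_of_nonneg (hx.1 a), abs_of_nonneg (hy.1 b)]
        exact mul_le_mul (mul_le_mul le_rfl (h a b) (abs_nonneg _) (hx.1 a)) le_rfl (hy.1 b)
          (mul_nonneg (hx.1 a) (le_trans (abs_nonneg _) (h a b)))
    _ = ε := by
        simp only [← Finset.mul_sum, ← Finset.sum_mul, hy.2, hx.2]
        ring

lemma stdSimplex_nonempty' (hA : Nonempty A) : Nonempty (stdSimplex ℝ A) := by
  classical
  obtain ⟨a0⟩ := hA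
  exact ⟨⟨Pi.single a0 1, single_mem_stdSimplex ℝ a0⟩⟩

lemma matrixValue_diff_le (hA : Nonempty A) (hB : Nonempty B) (g g' : A → B → ℝ) {ε : ℝ}
    (h : ∀ a b, |g a b - g' a b| ≤ ε) : |matrixValue g - matrixValue g'| ≤ ε := by
  haveI := stdSimplex_nonempty' hA
  haveI := stdSimplex_nonempty' hB
  have bddB : ∀ (k : A → B → ℝ) (x : stdSimplex ℝ A),
      BddBelow (Set.range fun y : stdSimplex ℝ B => ∑ a : A, ∑ b : B, x.1 a * k a b * y.1 b) := by
    intro k x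
    refine ⟨-(∑ a : A, ∑ b : B, |k a b|), ?_⟩
    rintro r ⟨y, rfl⟩
    have := abs_le.1 (pay_abs_le k x.2 y.2)
    linarith [this.1]
  have bddA : ∀ (k : A → B → ℝ),
      BddAbove (Set.range fun x : stdSimplex ℝ A =>
        ⨅ y : stdSimplex ℝ B, ∑ a : A, ∑ b : B, x.1 a * k a b * y.1 b) := by
    intro k
    refine ⟨∑ a : A, ∑ b : B, |k a b|, ?_⟩
    rintro r ⟨x, rfl⟩
    obtain ⟨y0⟩ := (inferInstance : Nonempty (stdSimplex ℝ B))
    refine le_trans (ciInf_le (bddB k x) y0) ?_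
    exact (abs_le.1 (pay_abs_le k x.2 y0.2)).2
  refine ciSup_diff_le _ _ (bddA g) (bddA g') fun x => ?_
  exact ciInf_diff_le _ _ (bddB g x) (bddB g' x) fun y => pay_diff_le g g' x.2 y.2 h

lemma continuous_matrixValue_eval (hA : Nonempty A) (hB : Nonempty B)
    (G : A → B → Polynomial ℝ) :
    Continuous fun z : ℝ => matrixValue fun a b => (G a b).eval z := by
  rw [continuous_iff_continuousAt]
  intro z0
  set d : ℝ → ℝ := fun z => ∑ a : A, ∑ b : B, |(G a b).eval z - (G a b).eval z0| with hdd
  have hdcont : Continuous d := by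
    apply continuous_finset_sum; intro a _
    apply continuous_finset_sum; intro b _
    exact ((G a b).continuous_aeval.sub continuous_const).abs
  have hd0 : d z0 = 0 := by simp [hdd]
  have hbound : ∀ z, |(matrixValue fun a b => (G a b).eval z)
      - matrixValue fun a b => (G a b).eval z0| ≤ d z := by
    intro z
    have hdz : d z = ∑ a : A, ∑ b : B, |(G a b).eval z - (G a b).eval z0| := rfl
    rw [hdz]
    refine matrixValue_diff_le hA hB _ _ fun a b => ?_
    calc |(G a b).eval z - (G a b).eval z0|
        ≤ ∑ b' : B, |(G a b').eval z - (G a b').eval z0| :=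
          Finset.single_le_sum (f := fun b' : B => |(G a b').eval z - (G a b').eval z0|)
            (fun b' _ => abs_nonneg _) (Finset.mem_univ b)
      _ ≤ ∑ a' : A, ∑ b' : B, |(G a' b').eval z - (G a' b').eval z0| :=
          Finset.single_le_sum (f := fun a' : A => ∑ b' : B, |(G a' b').eval z - (G a' b').eval z0|)
            (fun a' _ => Finset.sum_nonneg fun b' _ => abs_nonneg _) (Finset.mem_univ a)
  rw [ContinuousAt, tendsto_iff_dist_tendsto_zero]
  have : Filter.Tendsto d (nhds z0) (nhds 0) := by
    rw [← hd0]; exact hdcont.tendsto z0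
  refine squeeze_zero (fun z => dist_nonneg) (fun z => ?_) this
  rw [Real.dist_eq]
  exact hbound z

lemma subset_of_closed_cover {ι : Type} [Finite ι] {I : Set ℝ} (hI : IsPreconnected I)
    (hne : I.Nonempty) (F : ι → Set ℝ) (hFc : ∀ i, IsClosed (F i))
    (hcov : I ⊆ ⋃ i, F i)
    (hpair : ∀ i j, (I ∩ F i ∩ F j).Nonempty → I ∩ F i = I ∩ F j) :
    ∃ i, I ⊆ F i := by
  obtain ⟨z0, hz0⟩ := hne
  obtain ⟨i0, hi0⟩ := Set.mem_iUnion.1 (hcov hz0)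
  refine ⟨i0, ?_⟩
  set U : Set ℝ := ⋃ j ∈ {j | I ∩ F j = I ∩ F i0}, F j with hU
  set V : Set ℝ := ⋃ j ∈ {j | ¬ (I ∩ F j = I ∩ F i0)}, F j with hV
  have hUc : IsClosed U := Set.Finite.isClosed_biUnion (Set.toFinite _) fun j _ => hFc j
  have hVc : IsClosed V := Set.Finite.isClosed_biUnion (Set.toFinite _) fun j _ => hFc j
  have hcover : I ⊆ U ∪ V := by
    intro z hz
    obtain ⟨j, hj⟩ := Set.mem_iUnion.1 (hcov hz)
    by_cases hcase : I ∩ F j = I ∩ F i0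
    · exact Or.inl (Set.mem_biUnion hcase hj)
    · exact Or.inr (Set.mem_biUnion hcase hj)
  have hdisj : ∀ z ∈ I, z ∈ U → z ∈ V → False := by
    intro z hzI hzU hzV
    obtain ⟨j, hj, hzj⟩ := Set.mem_iUnion₂.1 hzU
    obtain ⟨j', hj', hzj'⟩ := Set.mem_iUnion₂.1 hzV
    exact hj' ((hpair j' j ⟨z, ⟨hzI, hzj'⟩, hzj⟩).trans hj)
  have hz0U : z0 ∈ U := Set.mem_biUnion (by rfl) hi0
  have hz0V : z0 ∈ Vᶜ := fun hzV => hdisj z0 hz0 hz0U hzV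
  have hsub : I ⊆ Vᶜ ∪ Uᶜ := by
    intro z hz
    by_cases hzU : z ∈ U
    · exact Or.inl fun hzV => hdisj z hz hzU hzV
    · exact Or.inr hzU
  have hIU : I ⊆ U := by
    by_contra hnot
    obtain ⟨z1, hz1I, hz1U⟩ := Set.not_subset.1 hnot
    obtain ⟨z2, hz2⟩ := hI Vᶜ Uᶜ hVc.isOpen_compl hUc.isOpen_compl hsub
      ⟨z0, hz0, hz0V⟩ ⟨z1, hz1I, hz1U⟩
    rcases hcover hz2.1 with h | h
    · exact hz2.2.2 h
    · exact hz2.2.1 h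
  intro z hz
  obtain ⟨j, hj, hzj⟩ := Set.mem_iUnion₂.1 (hIU hz)
  have : z ∈ I ∩ F i0 := hj ▸ (⟨hz, hzj⟩ : z ∈ I ∩ F j)
  exact this.2

lemma piecewiseRational_of_family {ι : Type} [Fintype ι] {u : ℝ → ℝ} (hu : Continuous u)
    (N D : ι → Polynomial ℝ)
    (hsel : ∀ z, ∃ i, (D i).eval z ≠ 0 ∧ u z = (N i).eval z / (D i).eval z) :
    PiecewiseRational u := by
  classical
  set s : Finset ℝ := (Finset.univ.biUnion fun i : ι => (D i).roots.toFinset) ∪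
    (Finset.univ.biUnion fun p : ι × ι =>
      ((N p.1) * (D p.2) - (N p.2) * (D p.1)).roots.toFinset) with hs
  set K := s.card with hK
  set g : Fin K → ℝ := fun i => ((s.orderIsoOfFin rfl i : ℝ)) with hg
  have hgmono : StrictMono g :=
    fun i j hij => Subtype.coe_lt_coe.2 ((s.orderIsoOfFin rfl).strictMono hij)
  have hgs : ∀ p ∈ s, ∃ i : Fin K, g i = p := by
    intro p hp
    obtain ⟨i, hi⟩ := (s.orderIsoOfFin rfl).surjective ⟨p, hp⟩
    exact ⟨i, by rw [hg]; exact congrArg Subtype.val hi⟩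
  set hh : Fin (K + 2) → EReal := fun j =>
    if hj : (j : ℕ) = 0 then ⊥ else if hj2 : (j : ℕ) = K + 1 then ⊤
      else ((g ⟨(j : ℕ) - 1, by omega⟩ : ℝ) : EReal) with hhh
  have hhmono : StrictMono hh := by
    intro a b hab
    have hab' : (a : ℕ) < (b : ℕ) := hab
    have hb2 : (b : ℕ) ≤ K + 1 := by omega
    simp only [hhh]
    split_ifs with h1 h2 h3 h4 h5 <;> try omega
    · exact bot_lt_top
    · exact EReal.bot_lt_coe _
    · exact EReal.coe_lt_top _
    · exact EReal.coe_lt_coe_iff.2 (hgmono (by simp only [Fin.mk_lt_mk]; omega))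
  have hmid : ∀ i : Fin K, hh ⟨(i : ℕ) + 1, by omega⟩ = ((g i : ℝ) : EReal) := by
    intro i
    have hi := i.2
    simp only [hhh]
    rw [dif_neg (by omega), dif_neg (by omega)]
    norm_num
  -- the open intervals
  set I : Fin (K + 1) → Set ℝ := fun k =>
    {z : ℝ | hh k.castSucc < (z : EReal) ∧ (z : EReal) < hh k.succ} with hI
  have hInots : ∀ k, ∀ z ∈ I k, z ∉ (s : Set ℝ) := by
    intro k z hz hzs
    obtain ⟨i, hi⟩ := hgs z hzs
    have h1 : hh k.castSucc < hh ⟨(i : ℕ) + 1, by omega⟩ := by rw [hmid, hi]; exact hz.1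
    have h2 : hh ⟨(i : ℕ) + 1, by omega⟩ < hh k.succ := by rw [hmid, hi]; exact hz.2
    rw [hhmono.lt_iff_lt] at h1 h2
    have e1 : (k.castSucc : ℕ) < (i : ℕ) + 1 := h1
    have e2 : ((i : ℕ) + 1 : ℕ) < (k.succ : ℕ) := h2
    simp [Fin.val_succ, Fin.coe_castSucc] at e1 e2
    omega
  have hIconn : ∀ k, IsPreconnected (I k) := by
    intro k
    have : Set.OrdConnected (I k) := by
      constructor
      intro x hx y hy z hz
      exact ⟨lt_of_lt_of_le hx.1 (EReal.coe_le_coe_iff.2 hz.1),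
        lt_of_le_of_lt (EReal.coe_le_coe_iff.2 hz.2) hy.2⟩
    exact this.isPreconnected
  -- roots facts
  have hroots : ∀ i : ι, D i ≠ 0 → ∀ z : ℝ, z ∉ (s : Set ℝ) → (D i).eval z ≠ 0 := by
    intro i hDi z hzs hz
    apply hzs
    simp only [hs, Finset.coe_union, Set.mem_union, Finset.coe_biUnion, Set.mem_iUnion]
    exact Or.inl ⟨i, by simp, by simp only [Finset.mem_coe, Multiset.mem_toFinset]; exact (mem_roots hDi).2 hz⟩
  have hpoly : ∀ i j : ι, N i * D j - N j * D i ≠ 0 → ∀ z : ℝ, z ∉ (s : Set ℝ) →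
      (N i * D j - N j * D i).eval z ≠ 0 := by
    intro i j hne z hzs hz
    apply hzs
    simp only [hs, Finset.coe_union, Set.mem_union, Finset.coe_biUnion, Set.mem_iUnion]
    exact Or.inr ⟨(i, j), by simp, by simp only [Finset.mem_coe, Multiset.mem_toFinset]; exact (mem_roots hne).2 hz⟩
  -- per-interval selection
  have hchoice : ∀ k : Fin (K + 1), ∃ QR : Polynomial ℝ × Polynomial ℝ,
      ∀ z ∈ I k, QR.2.eval z ≠ 0 ∧ u z = QR.1.eval z / QR.2.eval z := by
    intro k
    by_cases hne : (I k).Nonempty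
    · set F : {i : ι // D i ≠ 0} → Set ℝ :=
        fun i => {z | u z * (D i.1).eval z = (N i.1).eval z} with hF
      have hFc : ∀ i, IsClosed (F i) :=
        fun i => isClosed_eq (hu.mul (D i.1).continuous_aeval) (N i.1).continuous_aeval
      have hcov : I k ⊆ ⋃ i, F i := by
        intro z hz
        obtain ⟨i, hDi, hui⟩ := hsel z
        have hDine : D i ≠ 0 := fun h0 => hDi (by simp [h0])
        refine Set.mem_iUnion.2 ⟨⟨i, hDine⟩, ?_⟩
        simp only [hF, Set.mem_setOf_eq, hui]
        field_simp
      have hpair : ∀ i j, (I k ∩ F i ∩ F j).Nonempty → I k ∩ F i = I k ∩ F j := by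
        intro i j ⟨z0, ⟨hz0I, hz0i⟩, hz0j⟩
        have hz0s := hInots k z0 hz0I
        have hDiz : (D i.1).eval z0 ≠ 0 := hroots i.1 i.2 z0 hz0s
        have hDjz : (D j.1).eval z0 ≠ 0 := hroots j.1 j.2 z0 hz0s
        have hCz : (N i.1 * D j.1 - N j.1 * D i.1).eval z0 = 0 := by
          simp only [Set.mem_setOf_eq, hF] at hz0i hz0j
          simp only [eval_sub, eval_mul, ← hz0i, ← hz0j]
          ring
        have hC : N i.1 * D j.1 - N j.1 * D i.1 = 0 := by
          by_contra hC
          exact hpoly i.1 j.1 hC z0 hz0s hCz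
        have hC' : N i.1 * D j.1 = N j.1 * D i.1 := by linear_combination hC
        ext z
        simp only [Set.mem_inter_iff, Set.mem_setOf_eq, hF, and_congr_right_iff]
        intro hzI
        have hzs := hInots k z hzI
        have hDiz' : (D i.1).eval z ≠ 0 := hroots i.1 i.2 z hzs
        have hDjz' : (D j.1).eval z ≠ 0 := hroots j.1 j.2 z hzs
        have hCz' : (N i.1).eval z * (D j.1).eval z = (N j.1).eval z * (D i.1).eval z := by
          have := congrArg (eval z) hC'
          simpa [eval_mul] using this
        constructor
        · intro hzi
          apply mul_right_cancel₀ hDiz'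
          calc u z * (D j.1).eval z * (D i.1).eval z
              = (u z * (D i.1).eval z) * (D j.1).eval z := by ring
            _ = (N i.1).eval z * (D j.1).eval z := by rw [hzi]
            _ = (N j.1).eval z * (D i.1).eval z := hCz'
        · intro hzj
          apply mul_right_cancel₀ hDjz'
          calc u z * (D i.1).eval z * (D j.1).eval z
              = (u z * (D j.1).eval z) * (D i.1).eval z := by ring
            _ = (N j.1).eval z * (D i.1).eval z := by rw [hzj]
            _ = (N i.1).eval z * (D j.1).eval z := hCz'.symm
      obtain ⟨i, hi⟩ := subset_of_closed_cover (hIconn k) hne F hFc hcov hpair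
      refine ⟨(N i.1, D i.1), fun z hz => ?_⟩
      have hzs := hInots k z hz
      have hDz : (D i.1).eval z ≠ 0 := hroots i.1 i.2 z hzs
      have := hi hz
      simp only [hF, Set.mem_setOf_eq] at this
      exact ⟨hDz, by rw [eq_div_iff hDz]; exact this⟩
    · exact ⟨(0, 1), fun z hz => absurd ⟨z, hz⟩ hne⟩
  choose QR hQR using hchoice
  refine ⟨K, hh, fun k => (QR k).1, fun k => (QR k).2, hhmono, ?_, ?_, ?_⟩
  · simp [hhh]
  · simp only [hhh, Fin.val_last]
    rw [dif_neg (by omega)]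
    simp
  · intro k z h1 h2
    exact hQR k z ⟨h1, h2⟩

section rows
variable {A B : Type} [DecidableEq A]

/-- rows of candidate linear systems for the optimal-strategy LP -/
def gameRow (R : Type) [CommRing R] (g : A → B → R) : Unit ⊕ A ⊕ B → (A ⊕ Unit) → R :=
  Sum.elim (fun _ => Sum.elim (fun _ => 1) fun _ => 0)
    (Sum.elim (fun a0 => Sum.elim (fun a => if a = a0 then 1 else 0) fun _ => 0)
      (fun b => Sum.elim (fun a => g a b) fun _ => -1))

def gameRhs (R : Type) [CommRing R] : Unit ⊕ A ⊕ B → R := Sum.elim (fun _ => 1) fun _ => 0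

lemma gameRow_eval (G : A → B → Polynomial ℝ) (z : ℝ) (κ : Unit ⊕ A ⊕ B) (j : A ⊕ Unit) :
    (gameRow ℝ[X] G κ j).eval z = gameRow ℝ (fun a b => (G a b).eval z) κ j := by
  rcases κ with _ | a0 | b <;> rcases j with a | _ <;>
    simp [gameRow, apply_ite (eval z)]
end rows

section main
variable {A B : Type} [Fintype A] [Fintype B] [DecidableEq A]

lemma matrixValue_eq_cramer (hA : Nonempty A) (hB : Nonempty B) (g : A → B → ℝ) :
    ∃ c : (A ⊕ Unit) → (Unit ⊕ A ⊕ B),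
      (Matrix.of fun j k => gameRow ℝ g (c j) k).det ≠ 0 ∧
      matrixValue g = ((Matrix.of fun j k => gameRow ℝ g (c j) k).updateCol (Sum.inr ())
          (fun j => gameRhs ℝ (c j))).det / (Matrix.of fun j k => gameRow ℝ g (c j) k).det := by
  classical
  haveI := hA; haveI := hB
  obtain ⟨a0⟩ := hA; obtain ⟨b0'⟩ := hB
  haveI : Nonempty (stdSimplex ℝ A) := ⟨⟨_, single_mem_stdSimplex ℝ a0⟩⟩
  haveI : Nonempty (stdSimplex ℝ B) := ⟨⟨_, single_mem_stdSimplex ℝ b0'⟩⟩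
  set L : B → (A → ℝ) → ℝ := fun b x => ∑ a : A, x a * g a b with hL
  have hLcont : ∀ b, Continuous (L b) := fun b => by
    apply continuous_finset_sum; intro a _
    exact (continuous_apply a).mul continuous_const
  set φ : (A → ℝ) → ℝ := fun x => Finset.univ.inf' Finset.univ_nonempty (fun b => L b x) with hφ
  have hφcont : Continuous φ :=
    Continuous.finset_inf'_apply Finset.univ_nonempty fun b _ => hLcont b
  have hφle : ∀ x b, φ x ≤ L b x := fun x b =>
    Finset.inf'_le _ (Finset.mem_univ b)
  -- Step 1 : the inner infimum equals φ
  have hinner : ∀ x : stdSimplex ℝ A,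
      (⨅ y : stdSimplex ℝ B, ∑ a : A, ∑ b : B, x.1 a * g a b * y.1 b) = φ x.1 := by
    intro x
    have hpay : ∀ y : stdSimplex ℝ B,
        (∑ a : A, ∑ b : B, x.1 a * g a b * y.1 b) = ∑ b : B, L b x.1 * y.1 b := by
      intro y
      rw [Finset.sum_comm]
      exact Finset.sum_congr rfl fun b _ => by rw [hL]; rw [Finset.sum_mul]
    have hlow : ∀ y : stdSimplex ℝ B, φ x.1 ≤ ∑ a : A, ∑ b : B, x.1 a * g a b * y.1 b := by
      intro y
      rw [hpay y]
      calc φ x.1 = ∑ b : B, φ x.1 * y.1 b := by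
            rw [← Finset.mul_sum, y.2.2, mul_one]
        _ ≤ ∑ b : B, L b x.1 * y.1 b :=
            Finset.sum_le_sum fun b _ => mul_le_mul_of_nonneg_right (hφle x.1 b) (y.2.1 b)
    obtain ⟨b0, -, hb0⟩ := Finset.exists_mem_eq_inf' (Finset.univ_nonempty) (fun b => L b x.1)
    refine le_antisymm ?_ (le_ciInf hlow)
    have hy0 : (Pi.single b0 1 : B → ℝ) ∈ stdSimplex ℝ B := single_mem_stdSimplex ℝ b0
    refine le_trans (ciInf_le ⟨φ x.1, fun r ⟨y, hy⟩ => hy ▸ hlow y⟩ ⟨_, hy0⟩) ?_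
    rw [hpay ⟨_, hy0⟩]
    have : (∑ b : B, L b x.1 * (Pi.single b0 1 : B → ℝ) b) = L b0 x.1 := by
      rw [Finset.sum_eq_single b0]
      · simp
      · intro b _ hb; simp [Pi.single_apply, hb]
      · intro hb; exact absurd (Finset.mem_univ b0) hb
    rw [this, hφ]
    rw [← hb0]
  have hval : matrixValue g = ⨆ x : stdSimplex ℝ A, φ x.1 := by
    rw [matrixValue]
    exact iSup_congr hinner
  -- Step 2 : the sup is attained
  obtain ⟨x0⟩ := (inferInstance : Nonempty A)
  have hΔne : (stdSimplex ℝ A).Nonempty := ⟨_, single_mem_stdSimplex ℝ x0⟩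
  obtain ⟨xs, hxsΔ, hxsmax⟩ := (isCompact_stdSimplex ℝ A).exists_isMaxOn hΔne hφcont.continuousOn
  have hbdd : BddAbove (Set.range fun x : stdSimplex ℝ A => φ x.1) :=
    ⟨φ xs, fun r ⟨x, hx⟩ => hx ▸ hxsmax x.2⟩
  have hvxs : matrixValue g = φ xs := by
    rw [hval]
    exact le_antisymm (ciSup_le fun x => hxsmax x.2) (le_ciSup hbdd ⟨xs, hxsΔ⟩)
  set v := matrixValue g with hv
  have hub : ∀ x ∈ stdSimplex ℝ A, φ x ≤ v := by
    intro x hx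
    rw [hvxs]; exact hxsmax hx
  -- Step 3 : the optimal set and a maximizer of the sum of squares on it
  set O : Set (A → ℝ) := {x | x ∈ stdSimplex ℝ A ∧ ∀ b, v ≤ L b x} with hO
  have hxsO : xs ∈ O := by
    refine ⟨hxsΔ, fun b => ?_⟩
    rw [hvxs]; exact hφle xs b
  have hOcomp : IsCompact O := by
    have : O = stdSimplex ℝ A ∩ ⋂ b : B, {x | v ≤ L b x} := by
      ext x; simp [hO, Set.mem_iInter]
    rw [this]
    exact (isCompact_stdSimplex ℝ A).inter_right
      (isClosed_iInter fun b => isClosed_le continuous_const (hLcont b))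
  set Esq : (A → ℝ) → ℝ := fun x => ∑ a : A, (x a)^2 with hEsq
  have hEcont : Continuous Esq := by
    apply continuous_finset_sum; intro a _
    exact (continuous_apply a).pow 2
  obtain ⟨xh, hxhO, hxhmax⟩ := hOcomp.exists_isMaxOn ⟨xs, hxsO⟩ hEcont.continuousOn
  -- Step 4 : active constraints span everything
  set Xh : (A ⊕ Unit) → ℝ := Sum.elim xh (fun _ => v) with hXh
  set S : Set (Unit ⊕ A ⊕ B) :=
    {κ | Sum.elim (fun _ => True) (Sum.elim (fun a => xh a = 0) (fun b => L b xh = v)) κ} with hS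
  have hact : ∀ κ ∈ S, (∑ k : A ⊕ Unit, gameRow ℝ g κ k * Xh k) = gameRhs ℝ κ := by
    intro κ hκ
    rcases κ with u | a1 | b
    · simp only [gameRow, gameRhs, Fintype.sum_sum_type, Sum.elim_inl, Sum.elim_inr, hXh,
        one_mul, zero_mul, Finset.sum_const_zero, add_zero]
      exact hxhO.1.2
    · have hmem : xh a1 = 0 := hκ
      simp only [gameRow, gameRhs, Fintype.sum_sum_type, Sum.elim_inl, Sum.elim_inr, hXh,
        ite_mul, one_mul, zero_mul, Finset.sum_ite_eq', Finset.mem_univ, if_true,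
        Finset.sum_const_zero, add_zero]
      exact hmem
    · have hmem : L b xh = v := hκ
      simp only [gameRow, gameRhs, Fintype.sum_sum_type, Sum.elim_inl, Sum.elim_inr, hXh,
        Finset.sum_const_zero]
      have : (∑ a : A, g a b * xh a) = L b xh := by
        rw [hL]; exact Finset.sum_congr rfl fun a _ => mul_comm _ _
      rw [Finset.sum_const, this, hmem]
      simp
  have hspan : Submodule.span ℝ (gameRow ℝ g '' S) = ⊤ := by
    by_contra hne
    obtain ⟨f, hf0, hfbot⟩ := Submodule.exists_dual_map_eq_bot_of_lt_top
      (lt_top_iff_ne_top.2 hne) inferInstance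
    have hfS : ∀ κ ∈ S, f (gameRow ℝ g κ) = 0 := by
      intro κ hκ
      have : f (gameRow ℝ g κ) ∈ (Submodule.span ℝ (gameRow ℝ g '' S)).map f :=
        Submodule.mem_map_of_mem (Submodule.subset_span ⟨κ, hκ, rfl⟩)
      rw [hfbot] at this
      exact this
    set wv : (A ⊕ Unit) → ℝ := fun k => f (fun j => if k = j then 1 else 0) with hwv
    have hfrep : ∀ x : (A ⊕ Unit) → ℝ, f x = ∑ k : A ⊕ Unit, x k * wv k := by
      intro x
      conv_lhs => rw [pi_eq_sum_univ x, map_sum]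
      exact Finset.sum_congr rfl fun k _ => by rw [map_smul, smul_eq_mul, hwv]
    set w : A → ℝ := fun a => wv (Sum.inl a) with hw
    set μ : ℝ := wv (Sum.inr ()) with hμ
    have hrowsum : ∀ κ ∈ S, (∑ a : A, gameRow ℝ g κ (Sum.inl a) * w a)
        + gameRow ℝ g κ (Sum.inr ()) * μ = 0 := by
      intro κ hκ
      have := hfS κ hκ
      rw [hfrep] at this
      rw [Fintype.sum_sum_type] at this
      simpa using this
    have hwsum : (∑ a : A, w a) = 0 := by
      have := hrowsum (Sum.inl ()) trivial
      simpa [gameRow] using this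
    have hwzero : ∀ a, xh a = 0 → w a = 0 := by
      intro a ha
      have := hrowsum (Sum.inr (Sum.inl a)) ha
      simpa [gameRow, ite_mul, Finset.sum_ite_eq'] using this
    have hwactive : ∀ b, L b xh = v → (∑ a : A, g a b * w a) = μ := by
      intro b hb
      have := hrowsum (Sum.inr (Sum.inr b)) hb
      simp only [gameRow, Sum.elim_inr, Sum.elim_inl, neg_mul, one_mul] at this
      linarith
    -- perturbation along w (general facts)
    have hLpert : ∀ (u : A → ℝ) (b : B) (t : ℝ),
        L b (fun a => xh a + t * u a) = L b xh + t * ∑ a : A, g a b * u a := by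
      intro u b t
      rw [hL]
      simp only []
      rw [Finset.mul_sum, ← Finset.sum_add_distrib]
      exact Finset.sum_congr rfl fun a _ => by ring
    have hsimplex_ev : ∀ u : A → ℝ, (∑ a : A, u a) = 0 → (∀ a, xh a = 0 → u a = 0) →
        ∀ᶠ t in nhds (0:ℝ), (fun a => xh a + t * u a) ∈ stdSimplex ℝ A := by
      intro u husum huz
      have hcoord : ∀ a : A, ∀ᶠ t in nhds (0:ℝ), 0 ≤ xh a + t * u a := by
        intro a
        rcases eq_or_lt_of_le (hxhO.1.1 a) with h0 | hpos
        · refine Filter.Eventually.of_forall fun t => ?_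
          rw [huz a h0.symm, mul_zero, add_zero]
          exact hxhO.1.1 a
        · have htend : Filter.Tendsto (fun t : ℝ => xh a + t * u a) (nhds 0) (nhds (xh a)) := by
            have : Filter.Tendsto (fun t : ℝ => t * u a) (nhds 0) (nhds 0) := by
              simpa using (continuous_mul_right _).tendsto (0:ℝ)
            simpa using tendsto_const_nhds.add this
          exact (htend.eventually (lt_mem_nhds hpos)).mono fun t ht => le_of_lt ht
      have hall := Filter.eventually_all.2 hcoord
      refine hall.mono fun t ht => ⟨ht, ?_⟩
      rw [Finset.sum_add_distrib, hxhO.1.2, ← Finset.mul_sum, husum, mul_zero, add_zero]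
    have hinactive_ev : ∀ u : A → ℝ,
        ∀ᶠ t in nhds (0:ℝ), ∀ b : B, L b xh ≠ v → v < L b (fun a => xh a + t * u a) := by
      intro u
      refine Filter.eventually_all.2 fun b => ?_
      by_cases hb : L b xh = v
      · exact Filter.Eventually.of_forall fun t ht => absurd hb ht
      · have hgt : v < L b xh := lt_of_le_of_ne (hxhO.2 b) (Ne.symm hb)
        have htend : Filter.Tendsto (fun t : ℝ => L b (fun a => xh a + t * u a))
            (nhds 0) (nhds (L b xh)) := by
          simp only [hLpert]
          have : Filter.Tendsto (fun t : ℝ => t * ∑ a : A, g a b * u a) (nhds 0) (nhds 0) := by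
            simpa using (continuous_mul_right _).tendsto (0:ℝ)
          simpa using tendsto_const_nhds.add this
        exact (htend.eventually (lt_mem_nhds hgt)).mono fun t ht _ => ht
    -- now split on μ
    by_cases hμ0 : μ = 0
    · -- both directions stay in O : contradiction with maximality of Esq
      have hOev : ∀ᶠ t in nhds (0:ℝ), (fun a => xh a + t * w a) ∈ O := by
        filter_upwards [hsimplex_ev w hwsum hwzero, hinactive_ev w] with t h1 h2
        refine ⟨h1, fun b => ?_⟩
        by_cases hb : L b xh = v
        · rw [hLpert, hb, hwactive b hb, hμ0, mul_zero, add_zero]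
        · exact le_of_lt (h2 b hb)
      obtain ⟨δ, hδ, hδP⟩ := Metric.eventually_nhds_iff.1 hOev
      have hmem1 : (fun a => xh a + (δ/2) * w a) ∈ O := by
        apply hδP
        rw [Real.dist_eq, sub_zero, abs_of_pos (by linarith)]
        linarith
      have hmem2 : (fun a => xh a + (-(δ/2)) * w a) ∈ O := by
        apply hδP
        rw [Real.dist_eq, sub_zero, abs_of_neg (by linarith), neg_neg]
        linarith
      have hE1 : Esq (fun a => xh a + (δ/2) * w a) ≤ Esq xh := hxhmax hmem1
      have hE2 : Esq (fun a => xh a + (-(δ/2)) * w a) ≤ Esq xh := hxhmax hmem2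
      have hEexp : ∀ t : ℝ, Esq (fun a => xh a + t * w a)
          = Esq xh + 2 * t * (∑ a : A, xh a * w a) + t^2 * Esq w := by
        intro t
        rw [hEsq]
        simp only []
        rw [Finset.mul_sum, Finset.mul_sum, ← Finset.sum_add_distrib, ← Finset.sum_add_distrib]
        exact Finset.sum_congr rfl fun a _ => by ring
      have hEw : Esq w ≤ 0 := by
        have e1 := hEexp (δ/2)
        have e2 := hEexp (-(δ/2))
        rw [e1] at hE1
        rw [e2] at hE2
        have key : (δ/2)^2 * Esq w ≤ 0 := by nlinarith
        have hp : (0:ℝ) < (δ/2)^2 := by positivity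
        by_contra hcon
        push_neg at hcon
        nlinarith [mul_pos hp hcon]
      have hwz : ∀ a, w a = 0 := by
        intro a
        have hnn : ∀ a ∈ Finset.univ, (0:ℝ) ≤ (w a)^2 := fun a _ => sq_nonneg _
        have : ∀ a ∈ Finset.univ, (w a)^2 = 0 := by
          rw [← Finset.sum_eq_zero_iff_of_nonneg hnn]
          exact le_antisymm hEw (Finset.sum_nonneg hnn)
        exact pow_eq_zero_iff (by norm_num) |>.1 (this a (Finset.mem_univ a))
      -- but wv ≠ 0
      apply hf0
      have hwvz : ∀ k, wv k = 0 := by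
        intro k
        rcases k with a | u
        · exact hwz a
        · rw [← hμ] at *; exact hμ0
      apply LinearMap.ext
      intro x
      rw [hfrep x]
      simp [hwvz]
    · -- μ ≠ 0 : improve the value, contradiction
      set w' : A → ℝ := fun a => μ⁻¹ * w a with hw'
      have hw'sum : (∑ a : A, w' a) = 0 := by
        rw [hw', ← Finset.mul_sum, hwsum, mul_zero]
      have hw'zero : ∀ a, xh a = 0 → w' a = 0 := fun a ha => by
        show μ⁻¹ * w a = 0
        rw [hwzero a ha, mul_zero]
      have hw'active : ∀ b, L b xh = v → (∑ a : A, g a b * w' a) = 1 := by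
        intro b hb
        rw [hw']
        have : (∑ a : A, g a b * (μ⁻¹ * w a)) = μ⁻¹ * ∑ a : A, g a b * w a := by
          rw [Finset.mul_sum]; exact Finset.sum_congr rfl fun a _ => by ring
        rw [this, hwactive b hb, inv_mul_cancel₀ hμ0]
      have hev := (hsimplex_ev w' hw'sum hw'zero).and (hinactive_ev w')
      obtain ⟨δ, hδ, hδP⟩ := Metric.eventually_nhds_iff.1 hev
      have hmem : (fun a => xh a + (δ/2) * w' a) ∈ stdSimplex ℝ A ∧
          ∀ b : B, L b xh ≠ v → v < L b (fun a => xh a + (δ/2) * w' a) := by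
        apply hδP
        rw [Real.dist_eq, sub_zero, abs_of_pos (by linarith)]
        linarith
      have hgt : ∀ b : B, v < L b (fun a => xh a + (δ/2) * w' a) := by
        intro b
        by_cases hb : L b xh = v
        · rw [hLpert, hb, hw'active b hb, mul_one]
          linarith
        · exact hmem.2 b hb
      have hφgt : v < φ (fun a => xh a + (δ/2) * w' a) := by
        rw [hφ]
        rw [Finset.lt_inf'_iff]
        exact fun b _ => hgt b
      exact absurd (hub _ hmem.1) (not_le.2 hφgt)
  -- Step 5 : select a basis from the active rows
  have htfin : (gameRow ℝ g '' S).Finite := (Set.toFinite S).image _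
  obtain ⟨tset, htsub, htspan, htli⟩ := exists_linearIndependent ℝ (gameRow ℝ g '' S)
  rw [hspan] at htspan
  haveI : Fintype ↥tset := (htfin.subset htsub).fintype
  set b0 : Module.Basis ↥tset ℝ ((A ⊕ Unit) → ℝ) :=
    Module.Basis.mk htli (by rw [Subtype.range_coe, htspan]) with hb0
  set e : ↥tset ≃ (A ⊕ Unit) := b0.indexEquiv (Pi.basisFun ℝ (A ⊕ Unit)) with he
  set b1 : Module.Basis (A ⊕ Unit) ℝ ((A ⊕ Unit) → ℝ) := b0.reindex e with hb1
  have hmem : ∀ j : A ⊕ Unit, (b1 j : (A ⊕ Unit) → ℝ) ∈ gameRow ℝ g '' S := by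
    intro j
    have : b1 j = ((e.symm j : ↥tset) : (A ⊕ Unit) → ℝ) := by
      rw [hb1, Module.Basis.reindex_apply, hb0, Module.Basis.mk_apply]
    rw [this]
    exact htsub (e.symm j).2
  choose c hcS hcrow using fun j => (Set.mem_image _ _ _).1 (hmem j)
  set M : Matrix (A ⊕ Unit) (A ⊕ Unit) ℝ := Matrix.of fun j k => gameRow ℝ g (c j) k with hM
  have hMrow : ∀ j, (M j) = b1 j := by
    intro j
    funext k
    show gameRow ℝ g (c j) k = b1 j k
    rw [hcrow j]
  have hMli : LinearIndependent ℝ (fun j => M j) := by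
    have : (fun j => M j) = fun j => b1 j := funext hMrow
    rw [this]
    exact b1.linearIndependent
  have hMdet : M.det ≠ 0 :=
    ((Matrix.isUnit_iff_isUnit_det M).1 (Matrix.linearIndependent_rows_iff_isUnit.1 hMli)).ne_zero
  have hsys : M.mulVec Xh = fun j => gameRhs ℝ (c j) := by
    funext j
    show dotProduct (M j) Xh = _
    rw [dotProduct]
    exact hact (c j) (hcS j)
  have hcram : M.det • Xh = M.cramer (fun j => gameRhs ℝ (c j)) := by
    rw [← hsys, Matrix.cramer_eq_adjugate_mulVec, Matrix.mulVec_mulVec, Matrix.adjugate_mul,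
      Matrix.smul_mulVec, Matrix.one_mulVec]
  refine ⟨c, hMdet, ?_⟩
  have hcomp := congrFun hcram (Sum.inr ())
  rw [Pi.smul_apply, smul_eq_mul] at hcomp
  have hXhv : Xh (Sum.inr ()) = v := rfl
  rw [hXhv, Matrix.cramer_apply] at hcomp
  rw [eq_div_iff hMdet]
  show v * M.det = _
  rw [mul_comm]
  exact hcomp
end main

/-- If `u : ℝ → ℝ` is the value function of some two-player zero-sum polynomial game,
then `u` is continuous and piecewise rational. -/
theorem continuous_piecewise_rational_of_value_function (u : ℝ → ℝ) (hu : InV u) :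
    Continuous u ∧ PiecewiseRational u := by
  classical
  obtain ⟨A, B, iA, iB, hA, hB, G, hG⟩ := hu
  have hufun : u = fun z => matrixValue fun a b => (G a b).eval z := funext hG
  have hucont : Continuous u := by
    rw [hufun]; exact continuous_matrixValue_eval hA hB G
  refine ⟨hucont, ?_⟩
  set N : ((A ⊕ Unit) → (Unit ⊕ A ⊕ B)) → Polynomial ℝ := fun c =>
    ((Matrix.of fun j k => gameRow ℝ[X] G (c j) k).updateCol (Sum.inr ())
      (fun j => gameRhs ℝ[X] (c j))).det with hN
  set D : ((A ⊕ Unit) → (Unit ⊕ A ⊕ B)) → Polynomial ℝ := fun c =>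
    (Matrix.of fun j k => gameRow ℝ[X] G (c j) k).det with hD
  refine piecewiseRational_of_family hucont N D fun z => ?_
  obtain ⟨c, hdet, hvaleq⟩ := matrixValue_eq_cramer hA hB (fun a b => (G a b).eval z)
  have hmap : (Matrix.of fun j k => gameRow ℝ[X] G (c j) k).map (eval z)
      = Matrix.of fun j k => gameRow ℝ (fun a b => (G a b).eval z) (c j) k := by
    ext j k
    exact gameRow_eval G z (c j) k
  have hDev : (D c).eval z = (Matrix.of fun j k =>
      gameRow ℝ (fun a b => (G a b).eval z) (c j) k).det := by
    rw [hD]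
    have := RingHom.map_det (evalRingHom z) (Matrix.of fun j k => gameRow ℝ[X] G (c j) k)
    simp only [RingHom.mapMatrix_apply, coe_evalRingHom] at this
    rw [this, hmap]
  have hNev : (N c).eval z = ((Matrix.of fun j k =>
      gameRow ℝ (fun a b => (G a b).eval z) (c j) k).updateCol (Sum.inr ())
      (fun j => gameRhs ℝ (c j))).det := by
    rw [hN]
    have := RingHom.map_det (evalRingHom z)
      ((Matrix.of fun j k => gameRow ℝ[X] G (c j) k).updateCol (Sum.inr ())
        (fun j => gameRhs ℝ[X] (c j)))
    simp only [RingHom.mapMatrix_apply, coe_evalRingHom] at this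
    have hrhs : (eval z ∘ fun j => gameRhs ℝ[X] (c j))
        = (fun j => gameRhs (A := A) (B := B) ℝ (c j)) := by
      funext j
      rcases hcj : c j with _ | _ | _ <;> simp [gameRhs, hcj]
    rw [this, Matrix.map_updateCol, hmap, hrhs]
  refine ⟨c, ?_, ?_⟩
  · rw [hDev]; exact hdet
  · rw [hDev, hNev, hG z]
    exact hvaleq
end pay
end

section
/- Every continuous piecewise rational function u : ℝ → ℝ is the value function of some two-player zero-sum polynomial game (i.e., u ∈ 𝒱). -/
open Polynomial

namespace PGV

noncomputable def pay {A B : Type} [Fintype A] [Fintype B] (G : A → B → ℝ)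
    (x : A → ℝ) (y : B → ℝ) : ℝ :=
  ∑ a : A, ∑ b : B, x a * G a b * y b

variable {A B : Type} [Fintype A] [Fintype B]

lemma matrixValue_def (G : A → B → ℝ) :
    matrixValue G = ⨆ x : stdSimplex ℝ A, ⨅ y : stdSimplex ℝ B, pay G x.1 y.1 := rfl

lemma simplex_le_one {x : A → ℝ} (hx : x ∈ stdSimplex ℝ A) (a : A) : x a ≤ 1 := by
  have h := Finset.single_le_sum (fun i _ => hx.1 i) (Finset.mem_univ a)
  simpa [hx.2] using h

noncomputable def bnd (G : A → B → ℝ) : ℝ := ∑ a : A, ∑ b : B, |G a b|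

lemma abs_pay_le (G : A → B → ℝ) {x : A → ℝ} {y : B → ℝ}
    (hx : x ∈ stdSimplex ℝ A) (hy : y ∈ stdSimplex ℝ B) :
    |pay G x y| ≤ bnd G := by
  classical
  refine le_trans (Finset.abs_sum_le_sum_abs _ _) ?_
  refine Finset.sum_le_sum fun a _ => ?_
  refine le_trans (Finset.abs_sum_le_sum_abs _ _) ?_
  refine Finset.sum_le_sum fun b _ => ?_
  have h1 : |x a * G a b * y b| = x a * |G a b| * y b := by
    rw [abs_mul, abs_mul, abs_of_nonneg (hx.1 a), abs_of_nonneg (hy.1 b)]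
  rw [h1]
  calc x a * |G a b| * y b ≤ |G a b| * y b :=
        mul_le_mul_of_nonneg_right
          (mul_le_of_le_one_left (abs_nonneg _) (simplex_le_one hx a)) (hy.1 b)
    _ ≤ |G a b| := mul_le_of_le_one_right (abs_nonneg _) (simplex_le_one hy b)

lemma pay_le_bnd (G : A → B → ℝ) {x : A → ℝ} {y : B → ℝ}
    (hx : x ∈ stdSimplex ℝ A) (hy : y ∈ stdSimplex ℝ B) : pay G x y ≤ bnd G :=
  (le_abs_self _).trans (abs_pay_le G hx hy)

lemma neg_bnd_le_pay (G : A → B → ℝ) {x : A → ℝ} {y : B → ℝ}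
    (hx : x ∈ stdSimplex ℝ A) (hy : y ∈ stdSimplex ℝ B) : -bnd G ≤ pay G x y := by
  have := abs_pay_le G hx hy
  have := neg_abs_le (pay G x y)
  linarith

noncomputable def dirac [DecidableEq A] (a₀ : A) : A → ℝ := fun a => if a = a₀ then 1 else 0

lemma dirac_mem [DecidableEq A] (a₀ : A) : dirac a₀ ∈ stdSimplex ℝ A := by
  constructor
  · intro a; unfold dirac; split <;> norm_num
  · simp [dirac]

instance simplex_nonempty [Nonempty A] : Nonempty (stdSimplex ℝ A) := by
  classical
  exact ⟨⟨dirac (Classical.arbitrary A), dirac_mem _⟩⟩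

set_option linter.unusedSectionVars false

variable [Nonempty A] [Nonempty B]

lemma bddBelow_pay (G : A → B → ℝ) (x : stdSimplex ℝ A) :
    BddBelow (Set.range fun y : stdSimplex ℝ B => pay G x.1 y.1) := by
  refine ⟨-bnd G, ?_⟩
  rintro r ⟨y, rfl⟩
  exact neg_bnd_le_pay G x.2 y.2

lemma inner_le (G : A → B → ℝ) (x : stdSimplex ℝ A) (y : stdSimplex ℝ B) :
    (⨅ y' : stdSimplex ℝ B, pay G x.1 y'.1) ≤ pay G x.1 y.1 :=
  ciInf_le (bddBelow_pay G x) y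

lemma bddAbove_inner (G : A → B → ℝ) :
    BddAbove (Set.range fun x : stdSimplex ℝ A => ⨅ y : stdSimplex ℝ B, pay G x.1 y.1) := by
  refine ⟨bnd G, ?_⟩
  rintro r ⟨x, rfl⟩
  exact le_trans (inner_le G x (Classical.arbitrary _)) (pay_le_bnd G x.2 (Classical.arbitrary (stdSimplex ℝ B)).2)

lemma matrixValue_le {G : A → B → ℝ} {v : ℝ}
    (hv : ∀ x : stdSimplex ℝ A, ∃ y : stdSimplex ℝ B, pay G x.1 y.1 ≤ v) :
    matrixValue G ≤ v := by
  rw [matrixValue_def]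
  refine ciSup_le fun x => ?_
  obtain ⟨y, hy⟩ := hv x
  exact (inner_le G x y).trans hy

lemma le_matrixValue {G : A → B → ℝ} {v : ℝ} (x : stdSimplex ℝ A)
    (hv : ∀ y : stdSimplex ℝ B, v ≤ pay G x.1 y.1) :
    v ≤ matrixValue G := by
  rw [matrixValue_def]
  exact le_ciSup_of_le (bddAbove_inner G) x (le_ciInf hv)

lemma matrixValue_eq_of {G : A → B → ℝ} {v : ℝ} (x : stdSimplex ℝ A)
    (hx : ∀ y : stdSimplex ℝ B, v ≤ pay G x.1 y.1)
    (y : stdSimplex ℝ B) (hy : ∀ x' : stdSimplex ℝ A, pay G x'.1 y.1 ≤ v) :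
    matrixValue G = v :=
  le_antisymm (matrixValue_le fun x' => ⟨y, hy x'⟩) (le_matrixValue x hx)

lemma matrixValue_le_eps {G : A → B → ℝ} {v : ℝ}
    (hv : ∀ ε : ℝ, 0 < ε → ∀ x : stdSimplex ℝ A, ∃ y : stdSimplex ℝ B, pay G x.1 y.1 ≤ v + ε) :
    matrixValue G ≤ v := by
  refine le_of_forall_pos_le_add fun ε hε => ?_
  exact matrixValue_le (hv ε hε)

lemma le_matrixValue_eps {G : A → B → ℝ} {v : ℝ}
    (hv : ∀ ε : ℝ, 0 < ε → ∃ x : stdSimplex ℝ A, ∀ y : stdSimplex ℝ B, v - ε ≤ pay G x.1 y.1) :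
    v ≤ matrixValue G := by
  have h : ∀ ε : ℝ, 0 < ε → v ≤ matrixValue G + ε := by
    intro ε hε
    obtain ⟨x, hx⟩ := hv ε hε
    have := le_matrixValue x hx
    linarith
  exact le_of_forall_pos_le_add h

lemma inner_le_matrixValue (G : A → B → ℝ) (x : stdSimplex ℝ A) :
    (⨅ y : stdSimplex ℝ B, pay G x.1 y.1) ≤ matrixValue G := by
  rw [matrixValue_def]
  exact le_ciSup (bddAbove_inner G) x

lemma exists_pay_le (G : A → B → ℝ) (x : stdSimplex ℝ A) {ε : ℝ} (hε : 0 < ε) :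
    ∃ y : stdSimplex ℝ B, pay G x.1 y.1 ≤ matrixValue G + ε := by
  have h1 : (⨅ y : stdSimplex ℝ B, pay G x.1 y.1) < matrixValue G + ε :=
    lt_of_le_of_lt (inner_le_matrixValue G x) (by linarith)
  obtain ⟨y, hy⟩ := exists_lt_of_ciInf_lt h1
  exact ⟨y, hy.le⟩

lemma exists_good_x (G : A → B → ℝ) {ε : ℝ} (hε : 0 < ε) :
    ∃ x : stdSimplex ℝ A, ∀ y : stdSimplex ℝ B, matrixValue G - ε ≤ pay G x.1 y.1 := by
  have h1 : matrixValue G - ε < matrixValue G := by linarith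
  rw [matrixValue_def] at h1
  obtain ⟨x, hx⟩ := exists_lt_of_lt_ciSup h1
  refine ⟨x, fun y => ?_⟩
  exact le_trans hx.le (inner_le G x y)

end PGV

section closure

namespace PGV
set_option linter.unusedSectionVars false

variable {A B : Type} [Fintype A] [Fintype B]

lemma pay_matrix_add (G₁ G₂ : A → B → ℝ) (x : A → ℝ) (y : B → ℝ) :
    pay (fun a b => G₁ a b + G₂ a b) x y = pay G₁ x y + pay G₂ x y := by
  simp [pay, mul_add, add_mul, Finset.sum_add_distrib]

lemma pay_zero_left {x : A → ℝ} (hx : ∀ a, x a = 0) (G : A → B → ℝ) (y : B → ℝ) :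
    pay G x y = 0 := by
  simp [pay, hx]

lemma pay_smul_left (c : ℝ) (G : A → B → ℝ) (x : A → ℝ) (y : B → ℝ) :
    pay G (fun a => c * x a) y = c * pay G x y := by
  unfold pay
  rw [Finset.mul_sum]
  refine Finset.sum_congr rfl fun a _ => ?_
  rw [Finset.mul_sum]
  exact Finset.sum_congr rfl fun b _ => by ring

variable {A₁ B₁ A₂ B₂ : Type} [Fintype A₁] [Fintype B₁] [Fintype A₂] [Fintype B₂]

noncomputable def margL (y : B₁ × B₂ → ℝ) : B₁ → ℝ := fun b₁ => ∑ b₂ : B₂, y (b₁, b₂)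
noncomputable def margR (y : B₁ × B₂ → ℝ) : B₂ → ℝ := fun b₂ => ∑ b₁ : B₁, y (b₁, b₂)
noncomputable def prodv (x₁ : A₁ → ℝ) (x₂ : A₂ → ℝ) : A₁ × A₂ → ℝ := fun p => x₁ p.1 * x₂ p.2

lemma margL_mem {y : B₁ × B₂ → ℝ} (hy : y ∈ stdSimplex ℝ (B₁ × B₂)) :
    margL y ∈ stdSimplex ℝ B₁ := by
  constructor
  · intro b₁; exact Finset.sum_nonneg fun b₂ _ => hy.1 _
  · simp only [margL]
    rw [← Fintype.sum_prod_type]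
    exact hy.2

lemma margR_mem {y : B₁ × B₂ → ℝ} (hy : y ∈ stdSimplex ℝ (B₁ × B₂)) :
    margR y ∈ stdSimplex ℝ B₂ := by
  constructor
  · intro b₂; exact Finset.sum_nonneg fun b₁ _ => hy.1 _
  · simp only [margR]
    rw [← Fintype.sum_prod_type_right]
    exact hy.2

lemma prodv_mem {x₁ : A₁ → ℝ} {x₂ : A₂ → ℝ} (h₁ : x₁ ∈ stdSimplex ℝ A₁)
    (h₂ : x₂ ∈ stdSimplex ℝ A₂) : prodv x₁ x₂ ∈ stdSimplex ℝ (A₁ × A₂) := by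
  constructor
  · intro p; exact mul_nonneg (h₁.1 _) (h₂.1 _)
  · rw [Fintype.sum_prod_type]
    simp only [prodv]
    simp [← Finset.mul_sum, h₂.2, h₁.2]

lemma elim_left_mem {x₁ : A₁ → ℝ} (h₁ : x₁ ∈ stdSimplex ℝ A₁) :
    (Sum.elim x₁ (fun _ => (0:ℝ)) : A₁ ⊕ A₂ → ℝ) ∈ stdSimplex ℝ (A₁ ⊕ A₂) := by
  constructor
  · rintro (a | a) <;> simp [h₁.1 _]
  · rw [Fintype.sum_sum_type]
    simp [h₁.2]

lemma elim_right_mem {x₂ : A₂ → ℝ} (h₂ : x₂ ∈ stdSimplex ℝ A₂) :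
    (Sum.elim (fun _ => (0:ℝ)) x₂ : A₁ ⊕ A₂ → ℝ) ∈ stdSimplex ℝ (A₁ ⊕ A₂) := by
  constructor
  · rintro (a | a) <;> simp [h₂.1 _]
  · rw [Fintype.sum_sum_type]
    simp [h₂.2]

lemma pay_sum_left (G : A₁ ⊕ A₂ → B → ℝ) (x : A₁ ⊕ A₂ → ℝ) (y : B → ℝ) :
    pay G x y = pay (fun a b => G (.inl a) b) (fun a => x (.inl a)) y
      + pay (fun a b => G (.inr a) b) (fun a => x (.inr a)) y := by
  simp [pay, Fintype.sum_sum_type]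

lemma pay_sum_right (G : A → B₁ ⊕ B₂ → ℝ) (x : A → ℝ) (y : B₁ ⊕ B₂ → ℝ) :
    pay G x y = pay (fun a b => G a (.inl b)) x (fun b => y (.inl b))
      + pay (fun a b => G a (.inr b)) x (fun b => y (.inr b)) := by
  simp [pay, Fintype.sum_sum_type, Finset.sum_add_distrib]

lemma pay_fst (g : A → B₁ → ℝ) (x : A → ℝ) (y : B₁ × B₂ → ℝ) :
    pay (fun a (b : B₁ × B₂) => g a b.1) x y = pay g x (margL y) := by
  unfold pay margL
  refine Finset.sum_congr rfl fun a _ => ?_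
  rw [Fintype.sum_prod_type]
  refine Finset.sum_congr rfl fun b₁ _ => ?_
  rw [Finset.mul_sum]

lemma pay_snd (g : A → B₂ → ℝ) (x : A → ℝ) (y : B₁ × B₂ → ℝ) :
    pay (fun a (b : B₁ × B₂) => g a b.2) x y = pay g x (margR y) := by
  unfold pay margR
  refine Finset.sum_congr rfl fun a _ => ?_
  rw [Fintype.sum_prod_type_right]
  refine Finset.sum_congr rfl fun b₂ _ => ?_
  rw [Finset.mul_sum]

lemma pay_fst_left (g : A₁ → B → ℝ) (x : A₁ × A₂ → ℝ) (y : B → ℝ) :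
    pay (fun (a : A₁ × A₂) b => g a.1 b) x y = pay g (margL x) y := by
  unfold pay margL
  rw [Fintype.sum_prod_type]
  refine Finset.sum_congr rfl fun a₁ _ => ?_
  rw [Finset.sum_comm]
  refine Finset.sum_congr rfl fun b _ => ?_
  rw [Finset.sum_mul, Finset.sum_mul]

lemma pay_snd_left (g : A₂ → B → ℝ) (x : A₁ × A₂ → ℝ) (y : B → ℝ) :
    pay (fun (a : A₁ × A₂) b => g a.2 b) x y = pay g (margR x) y := by
  unfold pay margR
  rw [Fintype.sum_prod_type_right]
  refine Finset.sum_congr rfl fun a₂ _ => ?_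
  rw [Finset.sum_comm]
  refine Finset.sum_congr rfl fun b _ => ?_
  rw [Finset.sum_mul, Finset.sum_mul]

lemma margL_prodv {y₂ : A₂ → ℝ} (h₂ : ∑ a, y₂ a = 1) (y₁ : A₁ → ℝ) :
    margL (prodv y₁ y₂) = y₁ := by
  funext b₁
  simp only [margL, prodv]
  rw [← Finset.mul_sum, h₂, mul_one]

lemma margR_prodv {y₁ : A₁ → ℝ} (h₁ : ∑ a, y₁ a = 1) (y₂ : A₂ → ℝ) :
    margR (prodv y₁ y₂) = y₂ := by
  funext b₂
  simp only [margR, prodv]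
  rw [← Finset.sum_mul, h₁, one_mul]

variable [Nonempty A] [Nonempty B] [Nonempty A₁] [Nonempty B₁] [Nonempty A₂] [Nonempty B₂]

lemma matrixValue_const (c : ℝ) : matrixValue (fun (_ : A) (_ : B) => c) = c := by
  have key : ∀ (x : stdSimplex ℝ A) (y : stdSimplex ℝ B),
      pay (fun _ _ => c) x.1 y.1 = c := by
    intro x y
    unfold pay
    have : ∀ a, ∑ b : B, x.1 a * c * y.1 b = x.1 a * c := by
      intro a
      rw [← Finset.mul_sum, y.2.2, mul_one]
    rw [Finset.sum_congr rfl fun a _ => this a, ← Finset.sum_mul, x.2.2, one_mul]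
  exact matrixValue_eq_of (Classical.arbitrary _) (fun y => (key _ y).ge)
    (Classical.arbitrary _) (fun x => (key x _).le)

lemma matrixValue_max (g₁ : A₁ → B₁ → ℝ) (g₂ : A₂ → B₂ → ℝ) :
    matrixValue (fun (a : A₁ ⊕ A₂) (b : B₁ × B₂) =>
        Sum.elim (fun a₁ => g₁ a₁ b.1) (fun a₂ => g₂ a₂ b.2) a)
      = max (matrixValue g₁) (matrixValue g₂) := by
  set Gm : A₁ ⊕ A₂ → B₁ × B₂ → ℝ := fun a b =>
    Sum.elim (fun a₁ => g₁ a₁ b.1) (fun a₂ => g₂ a₂ b.2) a with hGm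
  have hle : matrixValue Gm ≤ max (matrixValue g₁) (matrixValue g₂) := by
    refine matrixValue_le_eps fun ε hε x => ?_
    set xl : A₁ → ℝ := fun a => x.1 (.inl a) with hxl
    set xr : A₂ → ℝ := fun a => x.1 (.inr a) with hxr
    have hsum : (∑ a, xl a) + (∑ a, xr a) = 1 := by
      rw [hxl, hxr, ← Fintype.sum_sum_type]
      exact x.2.2
    have hxl0 : 0 ≤ ∑ a, xl a := Finset.sum_nonneg fun a _ => x.2.1 _
    have hxr0 : 0 ≤ ∑ a, xr a := Finset.sum_nonneg fun a _ => x.2.1 _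
    have side : ∀ {C D : Type} [Fintype C] [Fintype D] [Nonempty C] [Nonempty D]
        (g : C → D → ℝ) (w : C → ℝ), (∀ c, 0 ≤ w c) →
        ∃ yy : stdSimplex ℝ D, pay g w yy.1 ≤ (∑ c, w c) * (matrixValue g + ε) := by
      intro C D _ _ _ _ g w hw
      rcases eq_or_lt_of_le (Finset.sum_nonneg fun c _ => hw c) with h0 | hpos
      · refine ⟨Classical.arbitrary _, ?_⟩
        have hz : ∀ c, w c = 0 := by
          intro c
          have := (Finset.sum_eq_zero_iff_of_nonneg (fun c _ => hw c)).mp h0.symm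
          exact this c (Finset.mem_univ c)
        rw [pay_zero_left hz, ← h0, zero_mul]
      · set t := ∑ c, w c
        have hmem : (fun c => t⁻¹ * w c) ∈ stdSimplex ℝ C := by
          constructor
          · intro c; exact mul_nonneg (inv_nonneg.mpr hpos.le) (hw c)
          · rw [← Finset.mul_sum]
            exact inv_mul_cancel₀ hpos.ne'
        obtain ⟨yy, hyy⟩ := exists_pay_le g ⟨_, hmem⟩ hε
        refine ⟨yy, ?_⟩
        have hw' : w = fun c => t * (t⁻¹ * w c) := by
          funext c; field_simp
        calc pay g w yy.1 = t * pay g (fun c => t⁻¹ * w c) yy.1 := by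
              conv_lhs => rw [hw']
              exact pay_smul_left t g (fun c => t⁻¹ * w c) yy.1
          _ ≤ t * (matrixValue g + ε) := mul_le_mul_of_nonneg_left hyy hpos.le
    obtain ⟨y₁, hy₁⟩ := side g₁ xl (fun a => x.2.1 _)
    obtain ⟨y₂, hy₂⟩ := side g₂ xr (fun a => x.2.1 _)
    refine ⟨⟨prodv y₁.1 y₂.1, prodv_mem y₁.2 y₂.2⟩, ?_⟩
    have hexp : pay Gm x.1 (prodv y₁.1 y₂.1)
        = pay g₁ xl y₁.1 + pay g₂ xr y₂.1 := by
      rw [pay_sum_left]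
      have e1 : pay (fun a b => Gm (.inl a) b) xl (prodv y₁.1 y₂.1)
          = pay g₁ xl y₁.1 := by
        rw [show (fun a b => Gm (.inl a) b) = (fun a (b : B₁ × B₂) => g₁ a b.1) from rfl]
        rw [pay_fst, margL_prodv y₂.2.2]
      have e2 : pay (fun a b => Gm (.inr a) b) xr (prodv y₁.1 y₂.1)
          = pay g₂ xr y₂.1 := by
        rw [show (fun a b => Gm (.inr a) b) = (fun a (b : B₁ × B₂) => g₂ a b.2) from rfl]
        rw [pay_snd, margR_prodv y₁.2.2]
      rw [e1, e2]
    rw [hexp]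
    have hb₁ : pay g₁ xl y₁.1 ≤ (∑ a, xl a) * (max (matrixValue g₁) (matrixValue g₂) + ε) :=
      hy₁.trans (mul_le_mul_of_nonneg_left (by simp [le_max_left, le_max_right]) hxl0)
    have hb₂ : pay g₂ xr y₂.1 ≤ (∑ a, xr a) * (max (matrixValue g₁) (matrixValue g₂) + ε) :=
      hy₂.trans (mul_le_mul_of_nonneg_left (by simp [le_max_left, le_max_right]) hxr0)
    calc pay g₁ xl y₁.1 + pay g₂ xr y₂.1
        ≤ ((∑ a, xl a) + (∑ a, xr a)) * (max (matrixValue g₁) (matrixValue g₂) + ε) := by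
          rw [add_mul]; exact add_le_add hb₁ hb₂
      _ = max (matrixValue g₁) (matrixValue g₂) + ε := by rw [hsum, one_mul]
  have hge₁ : matrixValue g₁ ≤ matrixValue Gm := by
    refine le_matrixValue_eps fun ε hε => ?_
    obtain ⟨x₁, hx₁⟩ := exists_good_x g₁ hε
    refine ⟨⟨Sum.elim x₁.1 (fun _ => 0), elim_left_mem x₁.2⟩, fun y => ?_⟩
    have hexp : pay Gm (Sum.elim x₁.1 (fun _ => 0)) y.1 = pay g₁ x₁.1 (margL y.1) := by
      rw [pay_sum_left]
      simp only [Sum.elim_inl, Sum.elim_inr]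
      have e1 : pay (fun a b => Gm (.inl a) b) x₁.1 y.1 = pay g₁ x₁.1 (margL y.1) :=
        pay_fst g₁ x₁.1 y.1
      have e2 : pay (fun a b => Gm (.inr a) b) (fun _ => (0:ℝ)) y.1 = 0 :=
        pay_zero_left (fun _ => rfl) _ _
      rw [e1, e2, add_zero]
    rw [hexp]
    exact hx₁ ⟨margL y.1, margL_mem y.2⟩
  have hge₂ : matrixValue g₂ ≤ matrixValue Gm := by
    refine le_matrixValue_eps fun ε hε => ?_
    obtain ⟨x₂, hx₂⟩ := exists_good_x g₂ hε
    refine ⟨⟨Sum.elim (fun _ => 0) x₂.1, elim_right_mem x₂.2⟩, fun y => ?_⟩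
    have hexp : pay Gm (Sum.elim (fun _ => 0) x₂.1) y.1 = pay g₂ x₂.1 (margR y.1) := by
      rw [pay_sum_left]
      simp only [Sum.elim_inl, Sum.elim_inr]
      have e1 : pay (fun a b => Gm (.inl a) b) (fun _ => (0:ℝ)) y.1 = 0 :=
        pay_zero_left (fun _ => rfl) _ _
      have e2 : pay (fun a b => Gm (.inr a) b) x₂.1 y.1 = pay g₂ x₂.1 (margR y.1) :=
        pay_snd g₂ x₂.1 y.1
      rw [e1, e2, zero_add]
    rw [hexp]
    exact hx₂ ⟨margR y.1, margR_mem y.2⟩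
  exact le_antisymm hle (max_le hge₁ hge₂)

end PGV

end closure

section closure2

namespace PGV
set_option linter.unusedSectionVars false

variable {A₁ B₁ A₂ B₂ : Type} [Fintype A₁] [Fintype B₁] [Fintype A₂] [Fintype B₂]
variable [Nonempty A₁] [Nonempty B₁] [Nonempty A₂] [Nonempty B₂]

lemma matrixValue_min (g₁ : A₁ → B₁ → ℝ) (g₂ : A₂ → B₂ → ℝ) :
    matrixValue (fun (a : A₁ × A₂) (b : B₁ ⊕ B₂) =>
        Sum.elim (fun b₁ => g₁ a.1 b₁) (fun b₂ => g₂ a.2 b₂) b)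
      = min (matrixValue g₁) (matrixValue g₂) := by
  set Gm : A₁ × A₂ → B₁ ⊕ B₂ → ℝ := fun a b =>
    Sum.elim (fun b₁ => g₁ a.1 b₁) (fun b₂ => g₂ a.2 b₂) b with hGm
  have hge : min (matrixValue g₁) (matrixValue g₂) ≤ matrixValue Gm := by
    refine le_matrixValue_eps fun ε hε => ?_
    obtain ⟨x₁, hx₁⟩ := exists_good_x g₁ hε
    obtain ⟨x₂, hx₂⟩ := exists_good_x g₂ hε
    refine ⟨⟨prodv x₁.1 x₂.1, prodv_mem x₁.2 x₂.2⟩, fun y => ?_⟩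
    set yl : B₁ → ℝ := fun b => y.1 (.inl b) with hyl
    set yr : B₂ → ℝ := fun b => y.1 (.inr b) with hyr
    have hsum : (∑ b, yl b) + (∑ b, yr b) = 1 := by
      rw [hyl, hyr, ← Fintype.sum_sum_type]
      exact y.2.2
    have hyl0 : 0 ≤ ∑ b, yl b := Finset.sum_nonneg fun b _ => y.2.1 _
    have hyr0 : 0 ≤ ∑ b, yr b := Finset.sum_nonneg fun b _ => y.2.1 _
    have hexp : pay Gm (prodv x₁.1 x₂.1) y.1
        = pay g₁ x₁.1 yl + pay g₂ x₂.1 yr := by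
      rw [pay_sum_right]
      have e1 : pay (fun a b => Gm a (.inl b)) (prodv x₁.1 x₂.1) yl
          = pay g₁ x₁.1 yl := by
        have : (fun (a : A₁ × A₂) b => Gm a (.inl b)) = (fun (a : A₁ × A₂) b => g₁ a.1 b) := rfl
        rw [this, pay_fst_left, margL_prodv x₂.2.2]
      have e2 : pay (fun a b => Gm a (.inr b)) (prodv x₁.1 x₂.1) yr
          = pay g₂ x₂.1 yr := by
        have : (fun (a : A₁ × A₂) b => Gm a (.inr b)) = (fun (a : A₁ × A₂) b => g₂ a.2 b) := rfl
        rw [this, pay_snd_left, margR_prodv x₁.2.2]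
      rw [e1, e2]
    rw [hexp]
    -- lower bound each side by (mass) * (value - ε)
    have side : ∀ {C D : Type} [Fintype C] [Fintype D] [Nonempty C] [Nonempty D]
        (g : C → D → ℝ) (xx : stdSimplex ℝ C) (w : D → ℝ), (∀ d, 0 ≤ w d) →
        (∀ yy : stdSimplex ℝ D, matrixValue g - ε ≤ pay g xx.1 yy.1) →
        (∑ d, w d) * (matrixValue g - ε) ≤ pay g xx.1 w := by
      intro C D _ _ _ _ g xx w hw hgood
      rcases eq_or_lt_of_le (Finset.sum_nonneg fun d _ => hw d) with h0 | hpos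
      · have hz : ∀ d, w d = 0 := by
          intro d
          exact (Finset.sum_eq_zero_iff_of_nonneg (fun d _ => hw d)).mp h0.symm d (Finset.mem_univ d)
        have : pay g xx.1 w = 0 := by simp [pay, hz]
        rw [this, ← h0, zero_mul]
      · set t := ∑ d, w d
        have hmem : (fun d => t⁻¹ * w d) ∈ stdSimplex ℝ D := by
          constructor
          · intro d; exact mul_nonneg (inv_nonneg.mpr hpos.le) (hw d)
          · rw [← Finset.mul_sum]
            exact inv_mul_cancel₀ hpos.ne'
        have h1 := hgood ⟨_, hmem⟩
        have hsc : pay g xx.1 w = t * pay g xx.1 (fun d => t⁻¹ * w d) := by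
          have hw' : w = fun d => t * (t⁻¹ * w d) := by funext d; field_simp
          conv_lhs => rw [hw']
          unfold pay
          rw [Finset.mul_sum]
          refine Finset.sum_congr rfl fun a _ => ?_
          rw [Finset.mul_sum]
          exact Finset.sum_congr rfl fun b _ => by ring
        rw [hsc]
        exact mul_le_mul_of_nonneg_left h1 hpos.le
    have s1 := side g₁ x₁ yl (fun b => y.2.1 _) hx₁
    have s2 := side g₂ x₂ yr (fun b => y.2.1 _) hx₂
    have m1 : (∑ b, yl b) * (min (matrixValue g₁) (matrixValue g₂) - ε)
        ≤ (∑ b, yl b) * (matrixValue g₁ - ε) :=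
      mul_le_mul_of_nonneg_left (by simp [min_le_left, min_le_right]) hyl0
    have m2 : (∑ b, yr b) * (min (matrixValue g₁) (matrixValue g₂) - ε)
        ≤ (∑ b, yr b) * (matrixValue g₂ - ε) :=
      mul_le_mul_of_nonneg_left (by simp [min_le_left, min_le_right]) hyr0
    have : min (matrixValue g₁) (matrixValue g₂) - ε
        = ((∑ b, yl b) + (∑ b, yr b)) * (min (matrixValue g₁) (matrixValue g₂) - ε) := by
      rw [hsum, one_mul]
    rw [this, add_mul]
    exact add_le_add (m1.trans s1) (m2.trans s2)
  have hle₁ : matrixValue Gm ≤ matrixValue g₁ := by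
    refine matrixValue_le_eps fun ε hε x => ?_
    have hmarg : margL x.1 ∈ stdSimplex ℝ A₁ := margL_mem x.2
    obtain ⟨y₁, hy₁⟩ := exists_pay_le g₁ ⟨_, hmarg⟩ hε
    refine ⟨⟨Sum.elim y₁.1 (fun _ => 0), elim_left_mem y₁.2⟩, ?_⟩
    have hexp : pay Gm x.1 (Sum.elim y₁.1 (fun _ => 0)) = pay g₁ (margL x.1) y₁.1 := by
      rw [pay_sum_right]
      simp only [Sum.elim_inl, Sum.elim_inr]
      have e2 : pay (fun a b => Gm a (.inr b)) x.1 (fun _ => (0:ℝ)) = 0 := by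
        simp [pay]
      have e1 : pay (fun a b => Gm a (.inl b)) x.1 y₁.1 = pay g₁ (margL x.1) y₁.1 := by
        have : (fun (a : A₁ × A₂) b => Gm a (.inl b)) = (fun (a : A₁ × A₂) b => g₁ a.1 b) := rfl
        rw [this, pay_fst_left]
      rw [e1, e2, add_zero]
    rw [hexp]
    exact hy₁
  have hle₂ : matrixValue Gm ≤ matrixValue g₂ := by
    refine matrixValue_le_eps fun ε hε x => ?_
    have hmarg : margR x.1 ∈ stdSimplex ℝ A₂ := margR_mem x.2
    obtain ⟨y₂, hy₂⟩ := exists_pay_le g₂ ⟨_, hmarg⟩ hε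
    refine ⟨⟨Sum.elim (fun _ => 0) y₂.1, elim_right_mem y₂.2⟩, ?_⟩
    have hexp : pay Gm x.1 (Sum.elim (fun _ => 0) y₂.1) = pay g₂ (margR x.1) y₂.1 := by
      rw [pay_sum_right]
      simp only [Sum.elim_inl, Sum.elim_inr]
      have e1 : pay (fun a b => Gm a (.inl b)) x.1 (fun _ => (0:ℝ)) = 0 := by
        simp [pay]
      have e2 : pay (fun a b => Gm a (.inr b)) x.1 y₂.1 = pay g₂ (margR x.1) y₂.1 := by
        have : (fun (a : A₁ × A₂) b => Gm a (.inr b)) = (fun (a : A₁ × A₂) b => g₂ a.2 b) := rfl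
        rw [this, pay_snd_left]
      rw [e1, e2, zero_add]
    rw [hexp]
    exact hy₂
  exact le_antisymm (le_min hle₁ hle₂) hge

lemma matrixValue_add (g₁ : A₁ → B₁ → ℝ) (g₂ : A₂ → B₂ → ℝ) :
    matrixValue (fun (a : A₁ × A₂) (b : B₁ × B₂) => g₁ a.1 b.1 + g₂ a.2 b.2)
      = matrixValue g₁ + matrixValue g₂ := by
  set Gm : A₁ × A₂ → B₁ × B₂ → ℝ := fun a b => g₁ a.1 b.1 + g₂ a.2 b.2 with hGm
  have key : ∀ (x : A₁ × A₂ → ℝ) (y : B₁ × B₂ → ℝ),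
      pay Gm x y = pay g₁ (margL x) (margL y) + pay g₂ (margR x) (margR y) := by
    intro x y
    have : pay Gm x y = pay (fun (a : A₁ × A₂) (b : B₁ × B₂) => g₁ a.1 b.1) x y
        + pay (fun (a : A₁ × A₂) (b : B₁ × B₂) => g₂ a.2 b.2) x y :=
      pay_matrix_add _ _ x y
    rw [this, pay_fst, pay_snd, pay_fst_left, pay_snd_left]
  have hle : matrixValue Gm ≤ matrixValue g₁ + matrixValue g₂ := by
    refine matrixValue_le_eps fun ε hε x => ?_
    obtain ⟨y₁, hy₁⟩ := exists_pay_le g₁ ⟨_, margL_mem x.2⟩ (half_pos hε)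
    obtain ⟨y₂, hy₂⟩ := exists_pay_le g₂ ⟨_, margR_mem x.2⟩ (half_pos hε)
    refine ⟨⟨prodv y₁.1 y₂.1, prodv_mem y₁.2 y₂.2⟩, ?_⟩
    rw [key, margL_prodv y₂.2.2, margR_prodv y₁.2.2]
    calc pay g₁ (margL x.1) y₁.1 + pay g₂ (margR x.1) y₂.1
        ≤ (matrixValue g₁ + ε / 2) + (matrixValue g₂ + ε / 2) := add_le_add hy₁ hy₂
      _ = matrixValue g₁ + matrixValue g₂ + ε := by ring
  have hge : matrixValue g₁ + matrixValue g₂ ≤ matrixValue Gm := by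
    refine le_matrixValue_eps fun ε hε => ?_
    obtain ⟨x₁, hx₁⟩ := exists_good_x g₁ (half_pos hε)
    obtain ⟨x₂, hx₂⟩ := exists_good_x g₂ (half_pos hε)
    refine ⟨⟨prodv x₁.1 x₂.1, prodv_mem x₁.2 x₂.2⟩, fun y => ?_⟩
    rw [key, margL_prodv x₂.2.2, margR_prodv x₁.2.2]
    have h1 := hx₁ ⟨_, margL_mem y.2⟩
    have h2 := hx₂ ⟨_, margR_mem y.2⟩
    have : matrixValue g₁ + matrixValue g₂ - ε
        = (matrixValue g₁ - ε / 2) + (matrixValue g₂ - ε / 2) := by ring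
    rw [this]
    exact add_le_add h1 h2
  exact le_antisymm hle hge

end PGV

end closure2

section InVclosure

namespace PGV

lemma InV_poly (p : Polynomial ℝ) : InV (fun z => p.eval z) := by
  refine ⟨Fin 1, Fin 1, inferInstance, inferInstance, ⟨0⟩, ⟨0⟩, fun _ _ => p, fun z => ?_⟩
  exact (matrixValue_const (A := Fin 1) (B := Fin 1) (p.eval z)).symm

lemma InV_const (c : ℝ) : InV (fun _ => c) := by
  have := InV_poly (Polynomial.C c)
  simpa using this

lemma InV_max {u v : ℝ → ℝ} (hu : InV u) (hv : InV v) : InV (fun z => max (u z) (v z)) := by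
  obtain ⟨A₁, B₁, iA₁, iB₁, hA₁, hB₁, G₁, hG₁⟩ := hu
  obtain ⟨A₂, B₂, iA₂, iB₂, hA₂, hB₂, G₂, hG₂⟩ := hv
  letI := iA₁; letI := iB₁; letI := iA₂; letI := iB₂
  haveI := hA₁; haveI := hB₁; haveI := hA₂; haveI := hB₂
  refine ⟨A₁ ⊕ A₂, B₁ × B₂, inferInstance, inferInstance, ⟨Sum.inl hA₁.some⟩,
    ⟨(hB₁.some, hB₂.some)⟩,
    fun a b => Sum.elim (fun a₁ => G₁ a₁ b.1) (fun a₂ => G₂ a₂ b.2) a, fun z => ?_⟩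
  have hmat : (fun (a : A₁ ⊕ A₂) (b : B₁ × B₂) =>
      ((Sum.elim (fun a₁ => G₁ a₁ b.1) (fun a₂ => G₂ a₂ b.2) a).eval z))
      = (fun a b => Sum.elim (fun a₁ => (G₁ a₁ b.1).eval z) (fun a₂ => (G₂ a₂ b.2).eval z) a) := by
    funext a b
    cases a <;> rfl
  show max (u z) (v z) = _
  rw [hG₁ z, hG₂ z]
  rw [show (@matrixValue (A₁ ⊕ A₂) (B₁ × B₂) _ _ fun a b =>
      ((Sum.elim (fun a₁ => G₁ a₁ b.1) (fun a₂ => G₂ a₂ b.2) a).eval z))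
    = @matrixValue (A₁ ⊕ A₂) (B₁ × B₂) _ _ (fun a b =>
      Sum.elim (fun a₁ => (G₁ a₁ b.1).eval z) (fun a₂ => (G₂ a₂ b.2).eval z) a) from by rw [hmat]]
  exact (matrixValue_max _ _).symm

lemma InV_min {u v : ℝ → ℝ} (hu : InV u) (hv : InV v) : InV (fun z => min (u z) (v z)) := by
  obtain ⟨A₁, B₁, iA₁, iB₁, hA₁, hB₁, G₁, hG₁⟩ := hu
  obtain ⟨A₂, B₂, iA₂, iB₂, hA₂, hB₂, G₂, hG₂⟩ := hv
  letI := iA₁; letI := iB₁; letI := iA₂; letI := iB₂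
  haveI := hA₁; haveI := hB₁; haveI := hA₂; haveI := hB₂
  refine ⟨A₁ × A₂, B₁ ⊕ B₂, inferInstance, inferInstance, ⟨(hA₁.some, hA₂.some)⟩,
    ⟨Sum.inl hB₁.some⟩,
    fun a b => Sum.elim (fun b₁ => G₁ a.1 b₁) (fun b₂ => G₂ a.2 b₂) b, fun z => ?_⟩
  have hmat : (fun (a : A₁ × A₂) (b : B₁ ⊕ B₂) =>
      ((Sum.elim (fun b₁ => G₁ a.1 b₁) (fun b₂ => G₂ a.2 b₂) b).eval z))
      = (fun a b => Sum.elim (fun b₁ => (G₁ a.1 b₁).eval z) (fun b₂ => (G₂ a.2 b₂).eval z) b) := by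
    funext a b
    cases b <;> rfl
  show min (u z) (v z) = _
  rw [hG₁ z, hG₂ z]
  rw [show (@matrixValue (A₁ × A₂) (B₁ ⊕ B₂) _ _ fun a b =>
      ((Sum.elim (fun b₁ => G₁ a.1 b₁) (fun b₂ => G₂ a.2 b₂) b).eval z))
    = @matrixValue (A₁ × A₂) (B₁ ⊕ B₂) _ _ (fun a b =>
      Sum.elim (fun b₁ => (G₁ a.1 b₁).eval z) (fun b₂ => (G₂ a.2 b₂).eval z) b) from by rw [hmat]]
  exact (matrixValue_min _ _).symm

lemma InV_add {u v : ℝ → ℝ} (hu : InV u) (hv : InV v) : InV (fun z => u z + v z) := by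
  obtain ⟨A₁, B₁, iA₁, iB₁, hA₁, hB₁, G₁, hG₁⟩ := hu
  obtain ⟨A₂, B₂, iA₂, iB₂, hA₂, hB₂, G₂, hG₂⟩ := hv
  letI := iA₁; letI := iB₁; letI := iA₂; letI := iB₂
  haveI := hA₁; haveI := hB₁; haveI := hA₂; haveI := hB₂
  refine ⟨A₁ × A₂, B₁ × B₂, inferInstance, inferInstance, ⟨(hA₁.some, hA₂.some)⟩,
    ⟨(hB₁.some, hB₂.some)⟩, fun a b => G₁ a.1 b.1 + G₂ a.2 b.2, fun z => ?_⟩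
  have hmat : (fun (a : A₁ × A₂) (b : B₁ × B₂) => ((G₁ a.1 b.1 + G₂ a.2 b.2).eval z))
      = (fun (a : A₁ × A₂) (b : B₁ × B₂) => (G₁ a.1 b.1).eval z + (G₂ a.2 b.2).eval z) := by
    funext a b
    simp
  show u z + v z = _
  rw [hG₁ z, hG₂ z]
  rw [show (@matrixValue (A₁ × A₂) (B₁ × B₂) _ _ fun a b => ((G₁ a.1 b.1 + G₂ a.2 b.2).eval z))
    = @matrixValue (A₁ × A₂) (B₁ × B₂) _ _ (fun (a : A₁ × A₂) (b : B₁ × B₂) =>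
      (G₁ a.1 b.1).eval z + (G₂ a.2 b.2).eval z) from by rw [hmat]]
  exact (matrixValue_add _ _).symm

end PGV

end InVclosure

section gadget

namespace PGV
set_option linter.unusedSectionVars false

lemma pay_fin2 (p q r s : ℝ) (x y : Fin 2 → ℝ) :
    pay (fun i j => !![p, q; r, s] i j) x y
      = x 0 * p * y 0 + x 0 * q * y 1 + x 1 * r * y 0 + x 1 * s * y 1 := by
  simp [pay, Fin.sum_univ_two]
  ring

lemma vec2_mem {w : ℝ} (h0 : 0 ≤ w) (h1 : w ≤ 1) : ![w, 1 - w] ∈ stdSimplex ℝ (Fin 2) := by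
  constructor
  · intro i
    fin_cases i
    · simpa using h0
    · simp
      linarith
  · simp [Fin.sum_univ_two]

lemma simplex2_coords {y : Fin 2 → ℝ} (hy : y ∈ stdSimplex ℝ (Fin 2)) :
    0 ≤ y 0 ∧ 0 ≤ y 1 ∧ y 0 + y 1 = 1 := by
  refine ⟨hy.1 0, hy.1 1, ?_⟩
  have := hy.2
  simpa [Fin.sum_univ_two] using this

lemma gadget_A (a f c : ℝ) (hc : -1 ≤ c) :
    matrixValue (fun i j => !![a, a - f; a - f, a + f * c] i j) = a - f / (c + 2) := by
  have hc2 : (0:ℝ) < c + 2 := by linarith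
  set w : ℝ := (c + 1) / (c + 2) with hw
  have hw0 : 0 ≤ w := div_nonneg (by linarith) hc2.le
  have hw1 : w ≤ 1 := by
    rw [hw, div_le_one hc2]; linarith
  have e0 : w * a + (1 - w) * (a - f) = a - f / (c + 2) := by
    rw [hw]; field_simp; ring
  have e1 : w * (a - f) + (1 - w) * (a + f * c) = a - f / (c + 2) := by
    rw [hw]; field_simp; ring
  set xs : stdSimplex ℝ (Fin 2) := ⟨![w, 1 - w], vec2_mem hw0 hw1⟩ with hxs
  have hx0 : xs.1 0 = w := rfl
  have hx1 : xs.1 1 = 1 - w := rfl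
  have key1 : ∀ y : stdSimplex ℝ (Fin 2),
      pay (fun i j => !![a, a - f; a - f, a + f * c] i j) xs.1 y.1 = a - f / (c + 2) := by
    intro y
    obtain ⟨hy0, hy1, hy01⟩ := simplex2_coords y.2
    rw [pay_fin2, hx0, hx1]
    linear_combination y.1 0 * e0 + y.1 1 * e1 + (a - f / (c + 2)) * hy01
  have key2 : ∀ x : stdSimplex ℝ (Fin 2),
      pay (fun i j => !![a, a - f; a - f, a + f * c] i j) x.1 xs.1 = a - f / (c + 2) := by
    intro x
    obtain ⟨hx0', hx1', hx01⟩ := simplex2_coords x.2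
    rw [pay_fin2, hx0, hx1]
    linear_combination x.1 0 * e0 + x.1 1 * e1 + (a - f / (c + 2)) * hx01
  exact matrixValue_eq_of xs (fun y => (key1 y).ge) xs (fun x => (key2 x).le)

lemma gadget_B (a f c : ℝ) (hc : c ≤ -1) :
    matrixValue (fun i j => !![a, a - f; a - f, a + f * c] i j) = a - f := by
  rcases le_or_gt 0 f with hf | hf
  · -- f ≥ 0 : row 0 and column 1 form a saddle
    set xs : stdSimplex ℝ (Fin 2) := ⟨![(1:ℝ), 1 - 1], vec2_mem zero_le_one le_rfl⟩ with hxs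
    set ys : stdSimplex ℝ (Fin 2) := ⟨![(0:ℝ), 1 - 0], vec2_mem le_rfl zero_le_one⟩ with hys
    refine matrixValue_eq_of xs ?_ ys ?_
    · intro y
      obtain ⟨hy0, hy1, hy01⟩ := simplex2_coords y.2
      rw [pay_fin2]
      have h0 : xs.1 0 = 1 := rfl
      have h1 : xs.1 1 = 1 - 1 := rfl
      rw [h0, h1]
      have key : 1 * a * y.1 0 + 1 * (a - f) * y.1 1 + (1 - 1) * (a - f) * y.1 0
          + (1 - 1) * (a + f * c) * y.1 1 = (a - f) + f * y.1 0 := by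
        linear_combination (a - f) * hy01
      rw [key]
      have := mul_nonneg hf hy0
      linarith
    · intro x
      obtain ⟨hx0, hx1, hx01⟩ := simplex2_coords x.2
      rw [pay_fin2]
      have h0 : ys.1 0 = 0 := rfl
      have h1 : ys.1 1 = 1 - 0 := rfl
      rw [h0, h1]
      have key : x.1 0 * a * 0 + x.1 0 * (a - f) * (1 - 0) + x.1 1 * (a - f) * 0
          + x.1 1 * (a + f * c) * (1 - 0) = (a - f) + x.1 1 * (f * (c + 1)) := by
        linear_combination (a - f) * hx01
      rw [key]
      have h2 : x.1 1 * (f * (c + 1)) ≤ 0 := by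
        have : f * (c + 1) ≤ 0 := mul_nonpos_of_nonneg_of_nonpos hf (by linarith)
        exact mul_nonpos_of_nonneg_of_nonpos hx1 this
      linarith
  · -- f < 0 : row 1 and column 0 form a saddle
    set xs : stdSimplex ℝ (Fin 2) := ⟨![(0:ℝ), 1 - 0], vec2_mem le_rfl zero_le_one⟩ with hxs
    set ys : stdSimplex ℝ (Fin 2) := ⟨![(1:ℝ), 1 - 1], vec2_mem zero_le_one le_rfl⟩ with hys
    refine matrixValue_eq_of xs ?_ ys ?_
    · intro y
      obtain ⟨hy0, hy1, hy01⟩ := simplex2_coords y.2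
      rw [pay_fin2]
      have h0 : xs.1 0 = 0 := rfl
      have h1 : xs.1 1 = 1 - 0 := rfl
      rw [h0, h1]
      have key : 0 * a * y.1 0 + 0 * (a - f) * y.1 1 + (1 - 0) * (a - f) * y.1 0
          + (1 - 0) * (a + f * c) * y.1 1 = (a - f) + y.1 1 * (f * (c + 1)) := by
        linear_combination (a - f) * hy01
      rw [key]
      have h2 : 0 ≤ y.1 1 * (f * (c + 1)) := by
        have : 0 ≤ f * (c + 1) := by
          have := mul_nonneg (show (0:ℝ) ≤ -f by linarith) (show (0:ℝ) ≤ -(c + 1) by linarith)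
          nlinarith
        exact mul_nonneg hy1 this
      linarith
    · intro x
      obtain ⟨hx0, hx1, hx01⟩ := simplex2_coords x.2
      rw [pay_fin2]
      have h0 : ys.1 0 = 1 := rfl
      have h1 : ys.1 1 = 1 - 1 := rfl
      rw [h0, h1]
      have key : x.1 0 * a * 1 + x.1 0 * (a - f) * (1 - 1) + x.1 1 * (a - f) * 1
          + x.1 1 * (a + f * c) * (1 - 1) = (a - f) + x.1 0 * f := by
        linear_combination (a - f) * hx01
      rw [key]
      have h2 : x.1 0 * f ≤ 0 := mul_nonpos_of_nonneg_of_nonpos hx0 hf.le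
      linarith

/-- the basic rational gadget value function -/
noncomputable def gdg (m : ℝ) (Q R : Polynomial ℝ) : ℝ → ℝ := fun z =>
  if 1 ≤ m * R.eval z then Q.eval z / R.eval z else m * Q.eval z

lemma InV_gdg {m : ℝ} (hm : 0 < m) (Q R : Polynomial ℝ) : InV (gdg m Q R) := by
  classical
  refine ⟨Fin 2, Fin 2, inferInstance, inferInstance, ⟨0⟩, ⟨0⟩,
    fun i j => !![Polynomial.C 0, Polynomial.C m * Q;
                  Polynomial.C m * Q, -(Polynomial.C m * Q) * (Polynomial.C m * R - Polynomial.C 2)] i j,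
    fun z => ?_⟩
  have hmat : (fun i j => Polynomial.eval z
      (!![Polynomial.C 0, Polynomial.C m * Q;
          Polynomial.C m * Q, -(Polynomial.C m * Q) * (Polynomial.C m * R - Polynomial.C 2)] i j))
      = (fun i j => !![(0:ℝ), 0 - (-(m * Q.eval z));
          0 - (-(m * Q.eval z)), 0 + (-(m * Q.eval z)) * (m * R.eval z - 2)] i j) := by
    funext i j
    fin_cases i <;> fin_cases j <;> simp <;> ring
  rw [show (@matrixValue (Fin 2) (Fin 2) _ _ fun i j => Polynomial.eval z
      (!![Polynomial.C 0, Polynomial.C m * Q;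
          Polynomial.C m * Q, -(Polynomial.C m * Q) * (Polynomial.C m * R - Polynomial.C 2)] i j))
    = @matrixValue (Fin 2) (Fin 2) _ _ (fun i j => !![(0:ℝ), 0 - (-(m * Q.eval z));
          0 - (-(m * Q.eval z)), 0 + (-(m * Q.eval z)) * (m * R.eval z - 2)] i j) from by rw [hmat]]
  unfold gdg
  by_cases hreg : 1 ≤ m * R.eval z
  · rw [if_pos hreg]
    have hc : (-1:ℝ) ≤ m * R.eval z - 2 := by linarith
    rw [gadget_A 0 (-(m * Q.eval z)) (m * R.eval z - 2) hc]
    have hR : R.eval z ≠ 0 := by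
      intro h0
      rw [h0] at hreg
      simp at hreg
      linarith
    have hmR : m * R.eval z ≠ 0 := by
      intro h0
      rw [h0] at hreg
      linarith
    field_simp
    ring
  · rw [if_neg hreg]
    push_neg at hreg
    have hc : m * R.eval z - 2 ≤ -1 := by linarith
    rw [gadget_B 0 (-(m * Q.eval z)) (m * R.eval z - 2) hc]
    ring

end PGV

end gadget

section analysis

open Filter Set

namespace PGV

/-- iterated max of finitely many reals -/
noncomputable def vmax : ∀ {n : ℕ}, (Fin (n + 1) → ℝ) → ℝ
  | 0, f => f 0
  | _ + 1, f => max (f 0) (vmax (fun i => f i.succ))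

lemma le_vmax : ∀ {n : ℕ} (f : Fin (n + 1) → ℝ) (k : Fin (n + 1)), f k ≤ vmax f := by
  intro n
  induction n with
  | zero =>
    intro f k
    have hk : k = 0 := Fin.eq_zero k
    rw [hk]
    exact le_of_eq rfl
  | succ n ih =>
    intro f k
    cases k using Fin.cases with
    | zero => exact le_max_left _ _
    | succ i => exact le_trans (ih (fun i => f i.succ) i) (le_max_right _ _)

lemma vmax_le : ∀ {n : ℕ} (f : Fin (n + 1) → ℝ) (c : ℝ), (∀ k, f k ≤ c) → vmax f ≤ c := by
  intro n
  induction n with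
  | zero => intro f c h; exact h 0
  | succ n ih =>
    intro f c h
    exact max_le (h 0) (ih (fun i => f i.succ) c fun i => h i.succ)

lemma InV_vmax : ∀ {n : ℕ} (w : Fin (n + 1) → ℝ → ℝ), (∀ k, InV (w k)) →
    InV (fun z => vmax (fun k => w k z)) := by
  intro n
  induction n with
  | zero => intro w hw; exact hw 0
  | succ n ih =>
    intro w hw
    have h1 := InV_max (hw 0) (ih (fun k => w k.succ) (fun k => hw _))
    exact h1

/-- two continuous functions agreeing on (a,b) agree at b -/
lemma eq_at_right {f g : ℝ → ℝ} {a b : ℝ} (hab : a < b)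
    (h : ∀ z : ℝ, a < z → z < b → f z = g z)
    (hf : ContinuousAt f b) (hg : ContinuousAt g b) : f b = g b := by
  have hcl : b ∈ closure (Set.Ioo a b) := by
    rw [closure_Ioo hab.ne]
    exact Set.right_mem_Icc.mpr hab.le
  have hne : (nhdsWithin b (Set.Ioo a b)).NeBot := mem_closure_iff_nhdsWithin_neBot.mp hcl
  have hft : Filter.Tendsto f (nhdsWithin b (Set.Ioo a b)) (nhds (f b)) := hf.continuousWithinAt
  have hgt : Filter.Tendsto g (nhdsWithin b (Set.Ioo a b)) (nhds (g b)) := hg.continuousWithinAt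
  have hft' : Filter.Tendsto f (nhdsWithin b (Set.Ioo a b)) (nhds (g b)) := by
    refine hgt.congr' ?_
    filter_upwards [self_mem_nhdsWithin] with z hz
    exact (h z hz.1 hz.2).symm
  exact tendsto_nhds_unique hft hft'

lemma eq_at_left {f g : ℝ → ℝ} {a b : ℝ} (hab : a < b)
    (h : ∀ z : ℝ, a < z → z < b → f z = g z)
    (hf : ContinuousAt f a) (hg : ContinuousAt g a) : f a = g a := by
  have hcl : a ∈ closure (Set.Ioo a b) := by
    rw [closure_Ioo hab.ne]
    exact Set.left_mem_Icc.mpr hab.le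
  have hne : (nhdsWithin a (Set.Ioo a b)).NeBot := mem_closure_iff_nhdsWithin_neBot.mp hcl
  have hft : Filter.Tendsto f (nhdsWithin a (Set.Ioo a b)) (nhds (f a)) := hf.continuousWithinAt
  have hgt : Filter.Tendsto g (nhdsWithin a (Set.Ioo a b)) (nhds (g a)) := hg.continuousWithinAt
  have hft' : Filter.Tendsto f (nhdsWithin a (Set.Ioo a b)) (nhds (g a)) := by
    refine hgt.congr' ?_
    filter_upwards [self_mem_nhdsWithin] with z hz
    exact (h z hz.1 hz.2).symm
  exact tendsto_nhds_unique hft hft'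

lemma delta_Icc {R : Polynomial ℝ} {a b : ℝ} (hab : a ≤ b)
    (h : ∀ z ∈ Set.Icc a b, 0 < R.eval z) :
    ∃ δ : ℝ, 0 < δ ∧ ∀ z ∈ Set.Icc a b, δ ≤ R.eval z := by
  obtain ⟨x, hx, hmin⟩ := (isCompact_Icc (a := a) (b := b)).exists_isMinOn
    (Set.nonempty_Icc.mpr hab) (R.continuous.continuousOn)
  exact ⟨R.eval x, h x hx, fun z hz => hmin hz⟩

lemma delta_Ici {R : Polynomial ℝ} {a : ℝ}
    (h : ∀ z, a ≤ z → 0 < R.eval z) :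
    ∃ δ : ℝ, 0 < δ ∧ ∀ z, a ≤ z → δ ≤ R.eval z := by
  rcases Nat.eq_zero_or_pos R.natDegree with hd | hd
  · obtain ⟨c, hc⟩ := Polynomial.natDegree_eq_zero.mp hd
    refine ⟨R.eval a, h a le_rfl, fun z hz => ?_⟩
    rw [← hc]
    simp
  · have hdeg : 0 < R.degree := Polynomial.natDegree_pos_iff_degree_pos.mp hd
    have ht := R.abs_tendsto_atTop hdeg
    obtain ⟨Z, hZ⟩ := (Filter.tendsto_atTop.mp ht 1).exists_forall_of_atTop
    obtain ⟨δ₁, hδ₁, hmin⟩ := delta_Icc (le_max_left a Z)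
      (fun z hz => h z hz.1)
    refine ⟨min δ₁ 1, lt_min hδ₁ one_pos, fun z hz => ?_⟩
    rcases le_total z (max a Z) with hle | hle
    · exact le_trans (min_le_left _ _) (hmin z ⟨hz, hle⟩)
    · have h1 : 1 ≤ |R.eval z| := hZ z (le_trans (le_max_right a Z) hle)
      have h2 : 0 < R.eval z := h z hz
      rw [abs_of_pos h2] at h1
      exact le_trans (min_le_right _ _) h1

lemma delta_Iic {R : Polynomial ℝ} {b : ℝ}
    (h : ∀ z, z ≤ b → 0 < R.eval z) :
    ∃ δ : ℝ, 0 < δ ∧ ∀ z, z ≤ b → δ ≤ R.eval z := by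
  have h' : ∀ z, -b ≤ z → 0 < (R.comp (-Polynomial.X)).eval z := by
    intro z hz
    rw [Polynomial.eval_comp]
    simp only [Polynomial.eval_neg, Polynomial.eval_X]
    exact h (-z) (by linarith)
  obtain ⟨δ, hδ, hmin⟩ := delta_Ici h'
  refine ⟨δ, hδ, fun z hz => ?_⟩
  have := hmin (-z) (by linarith)
  rw [Polynomial.eval_comp] at this
  simpa using this

lemma delta_univ {R : Polynomial ℝ}
    (h : ∀ z : ℝ, 0 < R.eval z) :
    ∃ δ : ℝ, 0 < δ ∧ ∀ z : ℝ, δ ≤ R.eval z := by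
  obtain ⟨δ₁, hδ₁, h₁⟩ := delta_Ici (a := 0) (fun z _ => h z)
  obtain ⟨δ₂, hδ₂, h₂⟩ := delta_Iic (b := 0) (fun z _ => h z)
  refine ⟨min δ₁ δ₂, lt_min hδ₁ hδ₂, fun z => ?_⟩
  rcases le_total 0 z with hz | hz
  · exact le_trans (min_le_left _ _) (h₁ z hz)
  · exact le_trans (min_le_right _ _) (h₂ z hz)

end PGV

end analysis

section normalize

open Filter Set Polynomial

namespace PGV

lemma piece_nonempty {lo hi : EReal} (hlh : lo < hi) : ∃ z : ℝ, lo < (z : EReal) ∧ (z : EReal) < hi := by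
  obtain ⟨m, hm1, hm2⟩ := exists_between hlh
  induction m using EReal.rec with
  | bot => exact absurd hm1 (by simp)
  | coe x => exact ⟨x, hm1, hm2⟩
  | top => exact absurd hm2 (by simp)

lemma inner_right {lo : EReal} {b : ℝ} (hlh : lo < (b : EReal)) :
    ∃ a' : ℝ, a' < b ∧ ∀ z : ℝ, a' < z → z < b → lo < (z : EReal) ∧ (z : EReal) < (b : EReal) := by
  induction lo using EReal.rec with
  | bot =>
    exact ⟨b - 1, by linarith, fun z h1 h2 => ⟨EReal.bot_lt_coe z, EReal.coe_lt_coe_iff.mpr h2⟩⟩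
  | coe a =>
    have hab : a < b := EReal.coe_lt_coe_iff.mp hlh
    exact ⟨a, hab, fun z h1 h2 => ⟨EReal.coe_lt_coe_iff.mpr h1, EReal.coe_lt_coe_iff.mpr h2⟩⟩
  | top => exact absurd hlh (by simp)

lemma inner_left {hi : EReal} {a : ℝ} (hlh : (a : EReal) < hi) :
    ∃ b' : ℝ, a < b' ∧ ∀ z : ℝ, a < z → z < b' → (a : EReal) < (z : EReal) ∧ (z : EReal) < hi := by
  induction hi using EReal.rec with
  | bot => exact absurd hlh (by simp)
  | coe b =>
    have hab : a < b := EReal.coe_lt_coe_iff.mp hlh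
    exact ⟨b, hab, fun z h1 h2 => ⟨EReal.coe_lt_coe_iff.mpr h1, EReal.coe_lt_coe_iff.mpr h2⟩⟩
  | top =>
    exact ⟨a + 1, by linarith, fun z h1 h2 => ⟨EReal.coe_lt_coe_iff.mpr h1, EReal.coe_lt_top z⟩⟩

lemma fixR (u : ℝ → ℝ) (hcont : Continuous u) (lo hi : EReal) (hlh : lo < hi) :
    ∀ (n : ℕ) (Q R : Polynomial ℝ), R.natDegree ≤ n →
    (∀ z : ℝ, lo < (z : EReal) → (z : EReal) < hi → R.eval z ≠ 0 ∧ u z = Q.eval z / R.eval z) →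
    ∃ Q' R' : Polynomial ℝ,
      (∀ z : ℝ, lo < (z : EReal) → (z : EReal) < hi → R'.eval z ≠ 0 ∧ u z = Q'.eval z / R'.eval z) ∧
      (∀ b : ℝ, hi = (b : EReal) → R'.eval b ≠ 0) := by
  have main : ∀ (n : ℕ) (Q R : Polynomial ℝ), R.natDegree ≤ n →
      (∀ z : ℝ, lo < (z : EReal) → (z : EReal) < hi → R.eval z ≠ 0 ∧ u z = Q.eval z / R.eval z) →
      (∃ b : ℝ, hi = (b : EReal) ∧ R.eval b = 0) →
      ∃ Q₁ R₁ : Polynomial ℝ, R₁.natDegree + 1 ≤ R.natDegree + 0 + 1 ∧ R₁.natDegree < R.natDegree ∧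
        (∀ z : ℝ, lo < (z : EReal) → (z : EReal) < hi →
          R₁.eval z ≠ 0 ∧ u z = Q₁.eval z / R₁.eval z) := by
    intro n Q R hdeg hQR ⟨b, hb, hRb⟩
    obtain ⟨z₀, hz₀1, hz₀2⟩ := piece_nonempty hlh
    have hRne : R ≠ 0 := by
      intro h0
      exact (hQR z₀ hz₀1 hz₀2).1 (by rw [h0]; simp)
    obtain ⟨a', ha'b, ha'⟩ := inner_right (lo := lo) (b := b) (hb ▸ hlh)
    have hQb : Q.eval b = 0 := by
      have heq : ∀ z : ℝ, a' < z → z < b → u z * R.eval z = Q.eval z := by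
        intro z h1 h2
        obtain ⟨hR0, hu⟩ := hQR z (ha' z h1 h2).1 (hb ▸ (ha' z h1 h2).2)
        rw [hu]
        field_simp
      have h2 := eq_at_right ha'b heq ((hcont.mul R.continuous).continuousAt)
        (Q.continuous.continuousAt)
      rw [hRb, mul_zero] at h2
      exact h2.symm
    obtain ⟨R₁, hR₁⟩ := dvd_iff_isRoot.mpr hRb
    obtain ⟨Q₁, hQ₁⟩ := dvd_iff_isRoot.mpr hQb
    have hR₁ne : R₁ ≠ 0 := by
      intro h0
      rw [h0, mul_zero] at hR₁
      exact hRne hR₁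
    have hdeg' : R.natDegree = R₁.natDegree + 1 := by
      rw [hR₁, natDegree_mul (X_sub_C_ne_zero b) hR₁ne, natDegree_X_sub_C]
      ring
    refine ⟨Q₁, R₁, by omega, by omega, fun z h1 h2 => ?_⟩
    obtain ⟨hR0, hu⟩ := hQR z h1 h2
    have hzb : z ≠ b := by
      have : (z : EReal) < (b : EReal) := hb ▸ h2
      exact ne_of_lt (EReal.coe_lt_coe_iff.mp this)
    have hfac : R.eval z = (z - b) * R₁.eval z := by
      rw [hR₁]; simp
    have hfacQ : Q.eval z = (z - b) * Q₁.eval z := by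
      rw [hQ₁]; simp
    have hR₁z : R₁.eval z ≠ 0 := by
      intro h0
      rw [hfac, h0, mul_zero] at hR0
      exact hR0 rfl
    refine ⟨hR₁z, ?_⟩
    rw [hu, hfac, hfacQ, mul_div_mul_left _ _ (sub_ne_zero.mpr hzb)]
  intro n
  induction n with
  | zero =>
    intro Q R hdeg hQR
    by_cases hex : ∃ b : ℝ, hi = (b : EReal) ∧ R.eval b = 0
    · obtain ⟨Q₁, R₁, _, hlt, _⟩ := main 0 Q R hdeg hQR hex
      omega
    · push_neg at hex
      exact ⟨Q, R, hQR, fun b hb => hex b hb⟩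
  | succ n ih =>
    intro Q R hdeg hQR
    by_cases hex : ∃ b : ℝ, hi = (b : EReal) ∧ R.eval b = 0
    · obtain ⟨Q₁, R₁, _, hlt, hprops⟩ := main (n+1) Q R hdeg hQR hex
      exact ih Q₁ R₁ (by omega) hprops
    · push_neg at hex
      exact ⟨Q, R, hQR, fun b hb => hex b hb⟩

lemma fixL (u : ℝ → ℝ) (hcont : Continuous u) (lo hi : EReal) (hlh : lo < hi) :
    ∀ (n : ℕ) (Q R : Polynomial ℝ), R.natDegree ≤ n →
    (∀ z : ℝ, lo < (z : EReal) → (z : EReal) < hi → R.eval z ≠ 0 ∧ u z = Q.eval z / R.eval z) →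
    (∀ b : ℝ, hi = (b : EReal) → R.eval b ≠ 0) →
    ∃ Q' R' : Polynomial ℝ,
      (∀ z : ℝ, lo < (z : EReal) → (z : EReal) < hi → R'.eval z ≠ 0 ∧ u z = Q'.eval z / R'.eval z) ∧
      (∀ b : ℝ, hi = (b : EReal) → R'.eval b ≠ 0) ∧
      (∀ a : ℝ, lo = (a : EReal) → R'.eval a ≠ 0) := by
  have main : ∀ (Q R : Polynomial ℝ),
      (∀ z : ℝ, lo < (z : EReal) → (z : EReal) < hi → R.eval z ≠ 0 ∧ u z = Q.eval z / R.eval z) →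
      (∀ b : ℝ, hi = (b : EReal) → R.eval b ≠ 0) →
      (∃ a : ℝ, lo = (a : EReal) ∧ R.eval a = 0) →
      ∃ Q₁ R₁ : Polynomial ℝ, R₁.natDegree < R.natDegree ∧
        (∀ z : ℝ, lo < (z : EReal) → (z : EReal) < hi →
          R₁.eval z ≠ 0 ∧ u z = Q₁.eval z / R₁.eval z) ∧
        (∀ b : ℝ, hi = (b : EReal) → R₁.eval b ≠ 0) := by
    intro Q R hQR hRhi ⟨a, ha, hRa⟩
    obtain ⟨z₀, hz₀1, hz₀2⟩ := piece_nonempty hlh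
    have hRne : R ≠ 0 := by
      intro h0
      exact (hQR z₀ hz₀1 hz₀2).1 (by rw [h0]; simp)
    obtain ⟨b', hab', hb'⟩ := inner_left (hi := hi) (a := a) (ha ▸ hlh)
    have hQa : Q.eval a = 0 := by
      have heq : ∀ z : ℝ, a < z → z < b' → u z * R.eval z = Q.eval z := by
        intro z h1 h2
        obtain ⟨hR0, hu⟩ := hQR z (ha ▸ (hb' z h1 h2).1) (hb' z h1 h2).2
        rw [hu]
        field_simp
      have h2 := eq_at_left hab' heq ((hcont.mul R.continuous).continuousAt)
        (Q.continuous.continuousAt)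
      rw [hRa, mul_zero] at h2
      exact h2.symm
    obtain ⟨R₁, hR₁⟩ := dvd_iff_isRoot.mpr hRa
    obtain ⟨Q₁, hQ₁⟩ := dvd_iff_isRoot.mpr hQa
    have hR₁ne : R₁ ≠ 0 := by
      intro h0
      rw [h0, mul_zero] at hR₁
      exact hRne hR₁
    have hdeg' : R.natDegree = R₁.natDegree + 1 := by
      rw [hR₁, natDegree_mul (X_sub_C_ne_zero a) hR₁ne, natDegree_X_sub_C]
      ring
    refine ⟨Q₁, R₁, by omega, fun z h1 h2 => ?_, fun b hb => ?_⟩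
    · obtain ⟨hR0, hu⟩ := hQR z h1 h2
      have hza : z ≠ a := by
        have : (a : EReal) < (z : EReal) := ha ▸ h1
        exact (ne_of_lt (EReal.coe_lt_coe_iff.mp this)).symm
      have hfac : R.eval z = (z - a) * R₁.eval z := by
        rw [hR₁]; simp
      have hfacQ : Q.eval z = (z - a) * Q₁.eval z := by
        rw [hQ₁]; simp
      have hR₁z : R₁.eval z ≠ 0 := by
        intro h0
        rw [hfac, h0, mul_zero] at hR0
        exact hR0 rfl
      refine ⟨hR₁z, ?_⟩
      rw [hu, hfac, hfacQ, mul_div_mul_left _ _ (sub_ne_zero.mpr hza)]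
    · have hRb := hRhi b hb
      have hfac : R.eval b = (b - a) * R₁.eval b := by
        rw [hR₁]; simp
      intro h0
      rw [hfac, h0, mul_zero] at hRb
      exact hRb rfl
  intro n
  induction n with
  | zero =>
    intro Q R hdeg hQR hRhi
    by_cases hex : ∃ a : ℝ, lo = (a : EReal) ∧ R.eval a = 0
    · obtain ⟨Q₁, R₁, hlt, _, _⟩ := main Q R hQR hRhi hex
      omega
    · push_neg at hex
      exact ⟨Q, R, hQR, hRhi, fun a ha => hex a ha⟩
  | succ n ih =>
    intro Q R hdeg hQR hRhi
    by_cases hex : ∃ a : ℝ, lo = (a : EReal) ∧ R.eval a = 0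
    · obtain ⟨Q₁, R₁, hlt, hprops, hRhi'⟩ := main Q R hQR hRhi hex
      exact ih Q₁ R₁ (by omega) hprops hRhi'
    · push_neg at hex
      exact ⟨Q, R, hQR, hRhi, fun a ha => hex a ha⟩

end PGV

end normalize

section normalize2

open Filter Set Polynomial

namespace PGV

lemma delta_piece {R : Polynomial ℝ} {lo hi : EReal} (hlh : lo < hi)
    (hpos : ∀ z : ℝ, lo ≤ (z : EReal) → (z : EReal) ≤ hi → 0 < R.eval z) :
    ∃ δ : ℝ, 0 < δ ∧ ∀ z : ℝ, lo ≤ (z : EReal) → (z : EReal) ≤ hi → δ ≤ R.eval z := by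
  induction lo using EReal.rec with
  | bot =>
    induction hi using EReal.rec with
    | bot => exact absurd hlh (by simp)
    | coe b =>
      obtain ⟨δ, hδ, hmin⟩ := delta_Iic (b := b)
        (fun z hz => hpos z bot_le (EReal.coe_le_coe_iff.mpr hz))
      exact ⟨δ, hδ, fun z _ hz2 => hmin z (EReal.coe_le_coe_iff.mp hz2)⟩
    | top =>
      obtain ⟨δ, hδ, hmin⟩ := delta_univ (fun z => hpos z bot_le le_top)
      exact ⟨δ, hδ, fun z _ _ => hmin z⟩
  | coe a =>
    induction hi using EReal.rec with
    | bot => exact absurd hlh (by simp)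
    | coe b =>
      have hab : a ≤ b := (EReal.coe_le_coe_iff.mp hlh.le)
      obtain ⟨δ, hδ, hmin⟩ := delta_Icc hab
        (fun z hz => hpos z (EReal.coe_le_coe_iff.mpr hz.1) (EReal.coe_le_coe_iff.mpr hz.2))
      exact ⟨δ, hδ, fun z hz1 hz2 =>
        hmin z ⟨EReal.coe_le_coe_iff.mp hz1, EReal.coe_le_coe_iff.mp hz2⟩⟩
    | top =>
      obtain ⟨δ, hδ, hmin⟩ := delta_Ici (a := a)
        (fun z hz => hpos z (EReal.coe_le_coe_iff.mpr hz) le_top)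
      exact ⟨δ, hδ, fun z hz1 _ => hmin z (EReal.coe_le_coe_iff.mp hz1)⟩
  | top => exact absurd hlh (by simp)

lemma normalize_piece (u : ℝ → ℝ) (hcont : Continuous u) (lo hi : EReal) (hlh : lo < hi)
    (Q R : Polynomial ℝ)
    (hQR : ∀ z : ℝ, lo < (z : EReal) → (z : EReal) < hi →
      R.eval z ≠ 0 ∧ u z = Q.eval z / R.eval z) :
    ∃ (Q' R' : Polynomial ℝ) (δ : ℝ), 0 < δ ∧
      ∀ z : ℝ, lo ≤ (z : EReal) → (z : EReal) ≤ hi →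
        δ ≤ R'.eval z ∧ u z = Q'.eval z / R'.eval z := by
  obtain ⟨Q₁, R₁, h1, hhi⟩ := fixR u hcont lo hi hlh R.natDegree Q R le_rfl hQR
  obtain ⟨Q₂, R₂, h2, hhi2, hlo2⟩ := fixL u hcont lo hi hlh R₁.natDegree Q₁ R₁ le_rfl h1 hhi
  have closed : ∀ z : ℝ, lo ≤ (z : EReal) → (z : EReal) ≤ hi →
      R₂.eval z ≠ 0 ∧ u z = Q₂.eval z / R₂.eval z := by
    intro z hz1 hz2
    rcases eq_or_lt_of_le hz1 with hE | hlt
    · have hR := hlo2 z hE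
      refine ⟨hR, ?_⟩
      have hzhi : (z : EReal) < hi := by rw [← hE]; exact hlh
      obtain ⟨b', hzb', hb'⟩ := inner_left hzhi
      have heq : ∀ w : ℝ, z < w → w < b' → u w = Q₂.eval w / R₂.eval w := by
        intro w hw1 hw2
        have hw := hb' w hw1 hw2
        have hlow : lo < (w : EReal) := by rw [hE]; exact hw.1
        exact (h2 w hlow hw.2).2
      exact eq_at_left hzb' heq hcont.continuousAt
        ((Q₂.continuous.continuousAt).div (R₂.continuous.continuousAt) hR)
    · rcases eq_or_lt_of_le hz2 with hE2 | hlt2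
      · have hR := hhi2 z hE2.symm
        refine ⟨hR, ?_⟩
        have hloz : lo < (z : EReal) := by rw [hE2]; exact hlh
        obtain ⟨a', ha'z, ha'⟩ := inner_right hloz
        have heq : ∀ w : ℝ, a' < w → w < z → u w = Q₂.eval w / R₂.eval w := by
          intro w hw1 hw2
          have hw := ha' w hw1 hw2
          have hwhi : (w : EReal) < hi := by rw [← hE2]; exact hw.2
          exact (h2 w hw.1 hwhi).2
        exact eq_at_right ha'z heq hcont.continuousAt
          ((Q₂.continuous.continuousAt).div (R₂.continuous.continuousAt) hR)
      · exact h2 z hlt hlt2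
  obtain ⟨z₀, hz₀1, hz₀2⟩ := piece_nonempty hlh
  have hz₀c1 : lo ≤ (z₀ : EReal) := hz₀1.le
  have hz₀c2 : (z₀ : EReal) ≤ hi := hz₀2.le
  obtain ⟨Q₃, R₃, h3, hz₀pos⟩ : ∃ Q₃ R₃ : Polynomial ℝ,
      (∀ z : ℝ, lo ≤ (z : EReal) → (z : EReal) ≤ hi →
        R₃.eval z ≠ 0 ∧ u z = Q₃.eval z / R₃.eval z) ∧ 0 < R₃.eval z₀ := by
    rcases ((closed z₀ hz₀c1 hz₀c2).1).lt_or_gt with hneg | hposs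
    · refine ⟨-Q₂, -R₂, fun z hz1 hz2 => ?_, by simp; linarith⟩
      obtain ⟨hR, hu⟩ := closed z hz1 hz2
      refine ⟨by simpa using hR, ?_⟩
      rw [hu]
      simp [neg_div_neg_eq]
    · exact ⟨Q₂, R₂, closed, hposs⟩
  have hposall : ∀ z : ℝ, lo ≤ (z : EReal) → (z : EReal) ≤ hi → 0 < R₃.eval z := by
    intro z hz1 hz2
    rcases ((h3 z hz1 hz2).1).lt_or_gt with hneg | hposs
    · exfalso
      rcases le_total z z₀ with hle | hle
      · have hIVT := intermediate_value_Icc hle (R₃.continuous.continuousOn)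
        obtain ⟨w, hw, hw0⟩ := hIVT ⟨hneg.le, hz₀pos.le⟩
        have hwc1 : lo ≤ (w : EReal) := le_trans hz1 (EReal.coe_le_coe_iff.mpr hw.1)
        have hwc2 : (w : EReal) ≤ hi := le_trans (EReal.coe_le_coe_iff.mpr hw.2) hz₀c2
        exact (h3 w hwc1 hwc2).1 hw0
      · have hIVT := intermediate_value_Icc' hle (R₃.continuous.continuousOn)
        obtain ⟨w, hw, hw0⟩ := hIVT ⟨hneg.le, hz₀pos.le⟩
        have hwc1 : lo ≤ (w : EReal) := le_trans hz₀c1 (EReal.coe_le_coe_iff.mpr hw.1)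
        have hwc2 : (w : EReal) ≤ hi := le_trans (EReal.coe_le_coe_iff.mpr hw.2) hz2
        exact (h3 w hwc1 hwc2).1 hw0
    · exact hposs
  obtain ⟨δ, hδ, hmin⟩ := delta_piece hlh hposall
  exact ⟨Q₃, R₃, δ, hδ, fun z hz1 hz2 => ⟨hmin z hz1 hz2, (h3 z hz1 hz2).2⟩⟩

end PGV

end normalize2

section mainaux

open Filter Set Polynomial

namespace PGV

lemma div_abs_bound {m r q : ℝ} (hm : 0 < m) (hr : 1 ≤ m * r) : |q / r| ≤ |m * q| := by
  have hrpos : 0 < r := by nlinarith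
  rw [abs_div, abs_of_pos hrpos, abs_mul, abs_of_pos hm, div_le_iff₀ hrpos]
  calc |q| = |q| * 1 := by ring
    _ ≤ |q| * (m * r) := by nlinarith [abs_nonneg q]
    _ = m * |q| * r := by ring

lemma two_mul_le_one_add_sq (x : ℝ) : 2 * x ≤ 1 + x ^ 2 := by nlinarith [sq_nonneg (x - 1)]

lemma abs_le_one_add_sq (x : ℝ) : |x| ≤ 1 + x ^ 2 := by
  nlinarith [sq_nonneg (|x| - 1), sq_abs x, abs_nonneg x]

/-- core inequality for the adjacent piece -/
lemma adjacent_ineq {qk rk qj rj bqz Bz c mk δj W zr br : ℝ}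
    (hW : W = c * (1 + Bz ^ 2))
    (hmk : 0 < mk) (hδj : 0 < δj)
    (hrk : 1 ≤ mk * rk) (hrj : δj ≤ rj)
    (hid : qj * rk - qk * rj = (zr - br) * bqz)
    (hbq : |bqz| ≤ Bz) (hB1 : 1 ≤ Bz)
    (hc : mk ≤ 2 * c * δj)
    (hz : br ≤ zr) :
    (br - zr) * W ≤ qj / rj - qk / rk := by
  have hrk0 : 0 < rk := by nlinarith
  have hrj0 : 0 < rj := lt_of_lt_of_le hδj hrj
  have hc0 : 0 < c := by nlinarith
  have h1 : δj ≤ mk * (rj * rk) := by nlinarith [mul_le_mul_of_nonneg_left hrk hrj0.le]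
  have h2 : 2 * Bz ≤ 1 + Bz ^ 2 := two_mul_le_one_add_sq Bz
  have hB0 : 0 ≤ Bz := by linarith
  have h3 : (2 * Bz) * δj ≤ (1 + Bz ^ 2) * (mk * (rj * rk)) :=
    mul_le_mul h2 h1 hδj.le (by nlinarith)
  have h4 : mk * Bz ≤ c * ((1 + Bz ^ 2) * (mk * (rj * rk))) := by nlinarith
  have h5 : Bz ≤ W * (rj * rk) := by
    rw [hW]
    have := (mul_le_mul_iff_right₀ hmk).mpr (le_refl (0:ℝ))
    nlinarith
  have h6 : 0 ≤ bqz + W * (rj * rk) := by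
    have := abs_le.mp hbq
    linarith [this.1]
  have h7 : (br - zr) * W * (rj * rk) ≤ qj * rk - qk * rj := by
    rw [hid]
    nlinarith [mul_nonneg (sub_nonneg.mpr hz) h6]
  have h8 : qj / rj - qk / rk = (qj * rk - qk * rj) / (rj * rk) := by
    field_simp
  rw [h8, le_div_iff₀ (by positivity)]
  linarith [h7]

/-- core inequality for the far region -/
lemma far_ineq {W Bz τ c vz uz s : ℝ}
    (hW : W = c * (1 + Bz ^ 2)) (hB1 : 1 ≤ Bz)
    (hτ : 0 < τ) (hc : 1 ≤ c * τ)
    (hs : τ ≤ s)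
    (hv : |vz| ≤ Bz) (hu : |uz| ≤ Bz) :
    (-s) * W ≤ uz - vz := by
  have hc0 : 0 < c := by nlinarith
  have hW0 : 0 ≤ W := by rw [hW]; positivity
  have h2 : 2 * Bz ≤ 1 + Bz ^ 2 := two_mul_le_one_add_sq Bz
  have h3 : 2 * Bz ≤ τ * W := by
    rw [hW]
    have hB0 : (0:ℝ) ≤ 1 + Bz ^ 2 := by positivity
    nlinarith
  have h4 : τ * W ≤ s * W := mul_le_mul_of_nonneg_right hs hW0
  have hv' := abs_le.mp hv
  have hu' := abs_le.mp hu
  nlinarith [hv'.1, hv'.2, hu'.1, hu'.2]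

end PGV

end mainaux

section assembly

open Filter Set Polynomial

namespace PGV

theorem aux_main (u : ℝ → ℝ) (hcont : Continuous u) (K : ℕ) (h : Fin (K + 2) → EReal)
    (hmono : StrictMono h) (h0 : h 0 = ⊥) (hlast : h (Fin.last (K + 1)) = ⊤)
    (Q R : Fin (K + 1) → Polynomial ℝ) (δ : Fin (K + 1) → ℝ) (hδ : ∀ k, 0 < δ k)
    (hQR : ∀ (k : Fin (K + 1)) (z : ℝ), h k.castSucc ≤ (z : EReal) → (z : EReal) ≤ h k.succ →
      δ k ≤ (R k).eval z ∧ u z = (Q k).eval z / (R k).eval z) :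
    InV u := by
  classical
  set m : Fin (K + 1) → ℝ := fun k => 2 / δ k with hm_def
  have hm : ∀ k, 0 < m k := fun k => by
    simp only [hm_def]
    exact div_pos two_pos (hδ k)
  have hmδ : ∀ k, m k * δ k = 2 := fun k => by
    simp only [hm_def]
    exact div_mul_cancel₀ 2 (hδ k).ne'
  -- real interior endpoints
  have hrealpt : ∀ i : Fin (K + 2), 0 < i.val → i.val < K + 1 → h i = (((h i).toReal : ℝ) : EReal) := by
    intro i h1 h2
    have hbot : h 0 < h i := hmono (by simp only [Fin.lt_def, Fin.val_zero]; omega)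
    have htop : h i < h (Fin.last (K + 1)) := hmono (by simp [Fin.lt_def]; omega)
    rw [h0] at hbot
    rw [hlast] at htop
    exact (EReal.coe_toReal htop.ne hbot.ne').symm
  -- covering
  have cover : ∀ z : ℝ, ∃ k : Fin (K + 1), h k.castSucc ≤ (z : EReal) ∧ (z : EReal) ≤ h k.succ := by
    intro z
    by_contra hno
    push_neg at hno
    have hstep : ∀ k : Fin (K + 1), h k.succ < (z : EReal) := by
      intro k
      induction k using Fin.induction with
      | zero =>
        refine hno 0 ?_
        rw [show ((0 : Fin (K + 1)).castSucc) = (0 : Fin (K + 2)) from rfl, h0]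
        exact bot_le
      | succ i ih =>
        refine hno i.succ ?_
        have hcs : (i.succ).castSucc = (i.castSucc).succ := (Fin.succ_castSucc i).symm
        rw [hcs]
        exact ih.le
    have hfin := hstep (Fin.last K)
    rw [Fin.succ_last, hlast] at hfin
    exact not_top_lt hfin
  -- endpoint reals
  set bR : Fin (K + 1) → ℝ := fun k => (h k.succ).toReal with hbR_def
  have hbR : ∀ k : Fin (K + 1), k.val < K → h k.succ = ((bR k : ℝ) : EReal) := by
    intro k hk
    simp only [hbR_def]
    exact hrealpt k.succ (by simp only [Fin.val_succ]; omega) (by simp only [Fin.val_succ]; omega)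
  set aR : Fin (K + 1) → ℝ := fun k => (h k.castSucc).toReal with haR_def
  have haR : ∀ k : Fin (K + 1), 0 < k.val → h k.castSucc = ((aR k : ℝ) : EReal) := by
    intro k hk
    simp only [haR_def]
    exact hrealpt k.castSucc (by simp only [Fin.coe_castSucc]; omega) (by simp only [Fin.coe_castSucc]; omega)
  -- neighbour indices
  set knext : Fin (K + 1) → Fin (K + 1) := fun k => ⟨min (k.val + 1) K, by omega⟩ with hknext_def
  set kprev : Fin (K + 1) → Fin (K + 1) := fun k => ⟨k.val - 1, by omega⟩ with hkprev_def
  -- membership of bR k in the two closed pieces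
  have hbRmem : ∀ k : Fin (K + 1), k.val < K →
      h k.castSucc ≤ ((bR k : ℝ) : EReal) ∧ ((bR k : ℝ) : EReal) ≤ h k.succ := by
    intro k hk
    constructor
    · rw [← hbR k hk]
      exact (hmono Fin.castSucc_lt_succ).le
    · rw [hbR k hk]
  have haRmem : ∀ k : Fin (K + 1), 0 < k.val →
      h k.castSucc ≤ ((aR k : ℝ) : EReal) ∧ ((aR k : ℝ) : EReal) ≤ h k.succ := by
    intro k hk
    constructor
    · rw [haR k hk]
    · rw [← haR k hk]
      exact (hmono Fin.castSucc_lt_succ).le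
  have hbRmem2 : ∀ k : Fin (K + 1), k.val < K →
      h (knext k).castSucc ≤ ((bR k : ℝ) : EReal) ∧ ((bR k : ℝ) : EReal) ≤ h (knext k).succ := by
    intro k hk
    have hidx : (knext k).castSucc = k.succ := by
      apply Fin.ext
      simp [hknext_def, Fin.val_succ, Fin.coe_castSucc]
      omega
    constructor
    · rw [hidx, hbR k hk]
    · rw [← hbR k hk, ← hidx]
      exact (hmono Fin.castSucc_lt_succ).le
  -- boundary polynomials
  set Gb : Fin (K + 1) → Polynomial ℝ := fun k => Q (knext k) * R k - Q k * R (knext k) with hGb_def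
  have hGb0 : ∀ k : Fin (K + 1), k.val < K → (Gb k).eval (bR k) = 0 := by
    intro k hk
    obtain ⟨hm1, hm2⟩ := hbRmem k hk
    obtain ⟨hm3, hm4⟩ := hbRmem2 k hk
    obtain ⟨hRk, hu1⟩ := hQR k (bR k) hm1 hm2
    obtain ⟨hRn, hu2⟩ := hQR (knext k) (bR k) hm3 hm4
    have hRk0 : (0:ℝ) < (R k).eval (bR k) := lt_of_lt_of_le (hδ k) hRk
    have hRn0 : (0:ℝ) < (R (knext k)).eval (bR k) := lt_of_lt_of_le (hδ (knext k)) hRn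
    have heq : (Q k).eval (bR k) / (R k).eval (bR k)
        = (Q (knext k)).eval (bR k) / (R (knext k)).eval (bR k) := by
      rw [← hu1, ← hu2]
    have hcross := (div_eq_div_iff hRk0.ne' hRn0.ne').mp heq
    rw [hGb_def]
    simp only [eval_sub, eval_mul]
    linarith
  have hbqex : ∀ k : Fin (K + 1), ∃ p : Polynomial ℝ,
      k.val < K → Gb k = (X - C (bR k)) * p := by
    intro k
    by_cases hk : k.val < K
    · obtain ⟨p, hp⟩ := dvd_iff_isRoot.mpr (hGb0 k hk)
      exact ⟨p, fun _ => hp⟩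
    · exact ⟨0, fun hk' => absurd hk' hk⟩
  choose bq hbq using hbqex
  -- the big bounding polynomial
  set B : Polynomial ℝ := C 1 + (∑ k : Fin (K + 1), (C (m k) * Q k) ^ 2)
      + (∑ k : Fin (K + 1), (bq k) ^ 2) with hB_def
  have hBval : ∀ z : ℝ, B.eval z = 1 + (∑ k : Fin (K + 1), (m k * (Q k).eval z) ^ 2)
      + (∑ k : Fin (K + 1), ((bq k).eval z) ^ 2) := by
    intro z
    rw [hB_def]
    simp [Polynomial.eval_finset_sum]
  have hB1 : ∀ z : ℝ, 1 ≤ B.eval z := by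
    intro z
    rw [hBval]
    have s1 : (0:ℝ) ≤ ∑ k : Fin (K + 1), (m k * (Q k).eval z) ^ 2 :=
      Finset.sum_nonneg fun k _ => sq_nonneg _
    have s2 : (0:ℝ) ≤ ∑ k : Fin (K + 1), ((bq k).eval z) ^ 2 :=
      Finset.sum_nonneg fun k _ => sq_nonneg _
    linarith
  have hBmQ : ∀ (k : Fin (K + 1)) (z : ℝ), |m k * (Q k).eval z| ≤ B.eval z := by
    intro k z
    have hterm : (m k * (Q k).eval z) ^ 2 ≤ ∑ k' : Fin (K + 1), (m k' * (Q k').eval z) ^ 2 :=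
      Finset.single_le_sum (f := fun k' : Fin (K + 1) => (m k' * (Q k').eval z) ^ 2)
        (fun k' _ => sq_nonneg _) (Finset.mem_univ k)
    have habs := abs_le_one_add_sq (m k * (Q k).eval z)
    have s2 : (0:ℝ) ≤ ∑ k' : Fin (K + 1), ((bq k').eval z) ^ 2 :=
      Finset.sum_nonneg fun k' _ => sq_nonneg _
    rw [hBval]
    linarith
  have hBbq : ∀ (k : Fin (K + 1)) (z : ℝ), |(bq k).eval z| ≤ B.eval z := by
    intro k z
    have hterm : ((bq k).eval z) ^ 2 ≤ ∑ k' : Fin (K + 1), ((bq k').eval z) ^ 2 :=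
      Finset.single_le_sum (f := fun k' : Fin (K + 1) => ((bq k').eval z) ^ 2)
        (fun k' _ => sq_nonneg _) (Finset.mem_univ k)
    have habs := abs_le_one_add_sq ((bq k).eval z)
    have s1 : (0:ℝ) ≤ ∑ k' : Fin (K + 1), (m k' * (Q k').eval z) ^ 2 :=
      Finset.sum_nonneg fun k' _ => sq_nonneg _
    rw [hBval]
    linarith
  -- continuity radii
  have hρRex : ∀ k : Fin (K + 1), ∃ ρ : ℝ, 0 < ρ ∧
      (k.val < K → ∀ w : ℝ, |w - bR k| ≤ ρ → 1 ≤ m k * (R k).eval w) := by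
    intro k
    by_cases hk : k.val < K
    · obtain ⟨hm1, hm2⟩ := hbRmem k hk
      have hRb : δ k ≤ (R k).eval (bR k) := (hQR k (bR k) hm1 hm2).1
      have h2b : 2 ≤ m k * (R k).eval (bR k) := by
        have := hmδ k
        nlinarith [hm k]
      have hcontf : ContinuousAt (fun w : ℝ => m k * (R k).eval w) (bR k) :=
        (continuous_const.mul (R k).continuous).continuousAt
      obtain ⟨ρ, hρ0, hball⟩ := Metric.continuousAt_iff.mp hcontf 1 one_pos
      refine ⟨ρ / 2, by linarith, fun _ w hw => ?_⟩
      have hdist : dist w (bR k) < ρ := by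
        rw [Real.dist_eq]
        calc |w - bR k| ≤ ρ / 2 := hw
          _ < ρ := by linarith
      have := hball hdist
      rw [Real.dist_eq] at this
      have habs := abs_lt.mp this
      linarith [habs.1]
    · exact ⟨1, one_pos, fun hk' => absurd hk' hk⟩
  choose ρR hρR0 hρR using hρRex
  have hρLex : ∀ k : Fin (K + 1), ∃ ρ : ℝ, 0 < ρ ∧
      (0 < k.val → ∀ w : ℝ, |w - aR k| ≤ ρ → 1 ≤ m k * (R k).eval w) := by
    intro k
    by_cases hk : 0 < k.val
    · obtain ⟨hm1, hm2⟩ := haRmem k hk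
      have hRb : δ k ≤ (R k).eval (aR k) := (hQR k (aR k) hm1 hm2).1
      have h2b : 2 ≤ m k * (R k).eval (aR k) := by
        have := hmδ k
        nlinarith [hm k]
      have hcontf : ContinuousAt (fun w : ℝ => m k * (R k).eval w) (aR k) :=
        (continuous_const.mul (R k).continuous).continuousAt
      obtain ⟨ρ, hρ0, hball⟩ := Metric.continuousAt_iff.mp hcontf 1 one_pos
      refine ⟨ρ / 2, by linarith, fun _ w hw => ?_⟩
      have hdist : dist w (aR k) < ρ := by
        rw [Real.dist_eq]
        calc |w - aR k| ≤ ρ / 2 := hw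
          _ < ρ := by linarith
      have := hball hdist
      rw [Real.dist_eq] at this
      have habs := abs_lt.mp this
      linarith [habs.1]
    · exact ⟨1, one_pos, fun hk' => absurd hk' hk⟩
  choose ρL hρL0 hρL using hρLex
  -- gaps
  set gapR : Fin (K + 1) → ℝ := fun k =>
    if h2 : k.val + 2 ≤ K then (h ⟨k.val + 2, by omega⟩).toReal - bR k else 1 with hgapR_def
  have hgapR0 : ∀ k, 0 < gapR k := by
    intro k
    simp only [hgapR_def]
    split
    case isTrue h2 =>
      have hkK : k.val < K := by omega
      have hlt : h k.succ < h ⟨k.val + 2, by omega⟩ := hmono (by simp [Fin.lt_def, Fin.val_succ])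
      have hr2 : h ⟨k.val + 2, by omega⟩ = (((h ⟨k.val + 2, by omega⟩).toReal : ℝ) : EReal) :=
        hrealpt _ (by show 0 < k.val + 2; omega) (by show k.val + 2 < K + 1; omega)
      rw [hbR k hkK, hr2] at hlt
      have := EReal.coe_lt_coe_iff.mp hlt
      linarith
    case isFalse => exact one_pos
  have hgapR_prop : ∀ (k j : Fin (K + 1)) (z : ℝ), k.val + 2 ≤ j.val →
      h j.castSucc ≤ (z : EReal) → gapR k + bR k ≤ z := by
    intro k j z hkj hjz
    have h2 : k.val + 2 ≤ K := by omega
    simp only [hgapR_def]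
    rw [dif_pos h2]
    have hmon : h ⟨k.val + 2, by omega⟩ ≤ h j.castSucc :=
      hmono.monotone (by simp [Fin.le_def, Fin.coe_castSucc]; omega)
    have hr2 : h ⟨k.val + 2, by omega⟩ = (((h ⟨k.val + 2, by omega⟩).toReal : ℝ) : EReal) :=
      hrealpt _ (by show 0 < k.val + 2; omega) (by show k.val + 2 < K + 1; omega)
    have : (((h ⟨k.val + 2, by omega⟩).toReal : ℝ) : EReal) ≤ (z : EReal) := by
      rw [← hr2]
      exact le_trans hmon hjz
    have := EReal.coe_le_coe_iff.mp this
    linarith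
  set gapL : Fin (K + 1) → ℝ := fun k =>
    if h2 : 2 ≤ k.val then aR k - (h ⟨k.val - 1, by omega⟩).toReal else 1 with hgapL_def
  have hgapL0 : ∀ k, 0 < gapL k := by
    intro k
    simp only [hgapL_def]
    split
    case isTrue h2 =>
      have hk0 : 0 < k.val := by omega
      have hlt : h ⟨k.val - 1, by omega⟩ < h k.castSucc := hmono (by simp only [Fin.lt_def, Fin.coe_castSucc, Fin.val_mk]; omega)
      have hr2 : h ⟨k.val - 1, by omega⟩ = (((h ⟨k.val - 1, by omega⟩).toReal : ℝ) : EReal) :=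
        hrealpt _ (by show 0 < k.val - 1; omega) (by show k.val - 1 < K + 1; omega)
      rw [haR k hk0, hr2] at hlt
      have := EReal.coe_lt_coe_iff.mp hlt
      linarith
    case isFalse => exact one_pos
  have hgapL_prop : ∀ (k j : Fin (K + 1)) (z : ℝ), j.val + 2 ≤ k.val →
      (z : EReal) ≤ h j.succ → z ≤ aR k - gapL k := by
    intro k j z hkj hjz
    have h2 : 2 ≤ k.val := by omega
    simp only [hgapL_def]
    rw [dif_pos h2]
    have hmon : h j.succ ≤ h ⟨k.val - 1, by omega⟩ :=
      hmono.monotone (by simp [Fin.le_def, Fin.val_succ]; omega)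
    have hr2 : h ⟨k.val - 1, by omega⟩ = (((h ⟨k.val - 1, by omega⟩).toReal : ℝ) : EReal) :=
      hrealpt _ (by show 0 < k.val - 1; omega) (by show k.val - 1 < K + 1; omega)
    have hle : (z : EReal) ≤ (((h ⟨k.val - 1, by omega⟩).toReal : ℝ) : EReal) := by
      rw [← hr2]
      exact le_trans hjz hmon
    have := EReal.coe_le_coe_iff.mp hle
    linarith
  -- tilting parameters
  set τR : Fin (K + 1) → ℝ := fun k => min (ρR k) (gapR k) with hτR_def
  have hτR0 : ∀ k, 0 < τR k := fun k => lt_min (hρR0 k) (hgapR0 k)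
  set τL : Fin (K + 1) → ℝ := fun k => min (ρL k) (gapL k) with hτL_def
  have hτL0 : ∀ k, 0 < τL k := fun k => lt_min (hρL0 k) (hgapL0 k)
  set c : Fin (K + 1) → ℝ := fun k =>
    max (max (m k / (2 * δ (knext k)) + 1) (m k / (2 * δ (kprev k)) + 1))
        (max (1 / τR k + 1) (1 / τL k + 1)) with hc_def
  have hc0 : ∀ k, 0 < c k := by
    intro k
    simp only [hc_def]
    have : (0:ℝ) < 1 / τR k + 1 := by
      have h1 : (0:ℝ) < 1 / τR k := div_pos one_pos (hτR0 k)
      linarith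
    calc (0:ℝ) < 1 / τR k + 1 := this
      _ ≤ max (1 / τR k + 1) (1 / τL k + 1) := le_max_left _ _
      _ ≤ _ := le_max_right _ _
  have hcadjR : ∀ k, m k ≤ 2 * c k * δ (knext k) := by
    intro k
    have h1 : m k / (2 * δ (knext k)) + 1 ≤ c k := by
      simp only [hc_def]
      exact le_trans (le_max_left _ _) (le_max_left _ _)
    have hd : (0:ℝ) < 2 * δ (knext k) := by linarith [hδ (knext k)]
    rw [div_add' _ _ _ hd.ne'] at h1
    rw [div_le_iff₀ hd] at h1
    nlinarith [hδ (knext k)]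
  have hcadjL : ∀ k, m k ≤ 2 * c k * δ (kprev k) := by
    intro k
    have h1 : m k / (2 * δ (kprev k)) + 1 ≤ c k := by
      simp only [hc_def]
      exact le_trans (le_max_right _ _) (le_max_left _ _)
    have hd : (0:ℝ) < 2 * δ (kprev k) := by linarith [hδ (kprev k)]
    rw [div_add' _ _ _ hd.ne'] at h1
    rw [div_le_iff₀ hd] at h1
    nlinarith [hδ (kprev k)]
  have hcτR : ∀ k, 1 ≤ c k * τR k := by
    intro k
    have h1 : 1 / τR k + 1 ≤ c k := by
      simp only [hc_def]
      exact le_trans (le_max_left _ _) (le_max_right _ _)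
    have ht := hτR0 k
    rw [div_add' _ _ _ ht.ne'] at h1
    rw [div_le_iff₀ ht] at h1
    nlinarith
  have hcτL : ∀ k, 1 ≤ c k * τL k := by
    intro k
    have h1 : 1 / τL k + 1 ≤ c k := by
      simp only [hc_def]
      exact le_trans (le_max_right _ _) (le_max_right _ _)
    have ht := hτL0 k
    rw [div_add' _ _ _ ht.ne'] at h1
    rw [div_le_iff₀ ht] at h1
    nlinarith
  -- tilting polynomials and the pieces of the lattice decomposition
  set W : Fin (K + 1) → Polynomial ℝ := fun k => C (c k) * (C 1 + B ^ 2) with hW_def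
  have hWval : ∀ (k) (z : ℝ), (W k).eval z = c k * (1 + (B.eval z) ^ 2) := by
    intro k z
    simp only [hW_def]
    simp
  set qRp : Fin (K + 1) → Polynomial ℝ := fun k =>
    if k.val < K then (C (bR k) - X) * W k else C 1 with hqRp_def
  set qLp : Fin (K + 1) → Polynomial ℝ := fun k =>
    if 0 < k.val then (X - C (aR k)) * W k else C 1 with hqLp_def
  set v : Fin (K + 1) → ℝ → ℝ := fun k => gdg (m k) (Q k) (R k) with hv_def
  set w : Fin (K + 1) → ℝ → ℝ :=
    fun k z => v k z + (min 0 ((qRp k).eval z) + min 0 ((qLp k).eval z)) with hw_def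
  have hInVw : ∀ k, InV (w k) := by
    intro k
    simp only [hw_def]
    exact InV_add (InV_gdg (hm k) (Q k) (R k))
      (InV_add (InV_min (InV_const 0) (InV_poly (qRp k)))
        (InV_min (InV_const 0) (InV_poly (qLp k))))
  -- bounds on v and u
  have hvB : ∀ (k) (z : ℝ), |v k z| ≤ B.eval z := by
    intro k z
    simp only [hv_def]
    show |gdg (m k) (Q k) (R k) z| ≤ B.eval z
    unfold gdg
    split
    case isTrue hbr => exact (div_abs_bound (hm k) hbr).trans (hBmQ k z)
    case isFalse => exact hBmQ k z
  have huB : ∀ z : ℝ, |u z| ≤ B.eval z := by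
    intro z
    obtain ⟨j, hj1, hj2⟩ := cover z
    obtain ⟨hRj, huj⟩ := hQR j z hj1 hj2
    rw [huj]
    refine (div_abs_bound (hm j) ?_).trans (hBmQ j z)
    have := hmδ j
    nlinarith [hm j]
  have hWnn : ∀ (k : Fin (K + 1)) (z : ℝ), 0 ≤ (W k).eval z := by
    intro k z
    rw [hWval]
    exact mul_nonneg (hc0 k).le (by positivity)
  -- FACT 1 : on the closed piece, w k agrees with u
  have fact1 : ∀ (k : Fin (K + 1)) (z : ℝ), h k.castSucc ≤ (z : EReal) → (z : EReal) ≤ h k.succ →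
      w k z = u z := by
    intro k z h1 h2
    obtain ⟨hRk, huk⟩ := hQR k z h1 h2
    have hbranch : 1 ≤ m k * (R k).eval z := by
      have := hmδ k
      nlinarith [hm k]
    have hveq : v k z = u z := by
      simp only [hv_def]
      unfold gdg
      rw [if_pos hbranch, huk]
    have hqR0 : 0 ≤ (qRp k).eval z := by
      simp only [hqRp_def]
      split
      case isTrue hk =>
        have hzb : z ≤ bR k := by
          have h2' := h2
          rw [hbR k hk] at h2'
          exact EReal.coe_le_coe_iff.mp h2'
        rw [eval_mul]
        refine mul_nonneg ?_ (hWnn k z)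
        simp only [eval_sub, eval_C, eval_X, sub_nonneg]
        exact hzb
      case isFalse => simp
    have hqL0 : 0 ≤ (qLp k).eval z := by
      simp only [hqLp_def]
      split
      case isTrue hk =>
        have hza : aR k ≤ z := by
          have h1' := h1
          rw [haR k hk] at h1'
          exact EReal.coe_le_coe_iff.mp h1'
        rw [eval_mul]
        refine mul_nonneg ?_ (hWnn k z)
        simp only [eval_sub, eval_C, eval_X, sub_nonneg]
        exact hza
      case isFalse => simp
    simp only [hw_def]
    rw [hveq, min_eq_left hqR0, min_eq_left hqL0]
    ring
  -- FACT 4 : to the right of the piece, the tilted gadget is below u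
  have fact4 : ∀ (k : Fin (K + 1)) (z : ℝ), k.val < K → bR k < z →
      (qRp k).eval z ≤ u z - v k z := by
    intro k z hk hz
    obtain ⟨j, hj1, hj2⟩ := cover z
    have hjk : k.val + 1 ≤ j.val := by
      by_contra hcon
      push_neg at hcon
      have hmon : h j.succ ≤ h k.succ :=
        hmono.monotone (by simp only [Fin.le_def, Fin.val_succ]; omega)
      have hzb : (z : EReal) ≤ ((bR k : ℝ) : EReal) := by
        rw [← hbR k hk]
        exact le_trans hj2 hmon
      exact absurd (EReal.coe_le_coe_iff.mp hzb) (not_le.mpr hz)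
    have hqRval : (qRp k).eval z = (bR k - z) * (c k * (1 + (B.eval z) ^ 2)) := by
      simp only [hqRp_def]
      rw [if_pos hk, eval_mul, hWval]
      simp
    by_cases hcase : j.val = k.val + 1 ∧ 1 ≤ m k * (R k).eval z
    · obtain ⟨hjv, hbr⟩ := hcase
      have hknval : (knext k).val = min (k.val + 1) K := rfl
      have hjknext : j = knext k := by
        apply Fin.ext
        omega
      obtain ⟨hRj, huj⟩ := hQR j z hj1 hj2
      have hvk : v k z = (Q k).eval z / (R k).eval z := by
        simp only [hv_def]
        unfold gdg
        rw [if_pos hbr]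
      have hGbk := hbq k hk
      have hid : (Q j).eval z * (R k).eval z - (Q k).eval z * (R j).eval z
          = (z - bR k) * (bq k).eval z := by
        have hev : (Gb k).eval z = ((X - C (bR k)) * bq k).eval z := by rw [← hGbk]
        simp only [hGb_def] at hev
        rw [← hjknext] at hev
        simpa using hev
      rw [hqRval, huj, hvk]
      exact adjacent_ineq rfl (hm k) (hδ j) hbr hRj hid (hBbq k z) (hB1 z)
        (by rw [hjknext] at *; exact hcadjR k) hz.le
    · have hτz : τR k ≤ z - bR k := by
        rcases not_and_or.mp hcase with hjv | hbr
        · have hj2' : k.val + 2 ≤ j.val := by omega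
          have hgap := hgapR_prop k j z hj2' hj1
          calc τR k ≤ gapR k := min_le_right _ _
            _ ≤ z - bR k := by linarith
        · push_neg at hbr
          have habs : ρR k < |z - bR k| := by
            by_contra hle
            push_neg at hle
            exact absurd (hρR k hk z hle) (not_le.mpr hbr)
          rw [abs_of_pos (by linarith : (0:ℝ) < z - bR k)] at habs
          calc τR k ≤ ρR k := min_le_left _ _
            _ ≤ z - bR k := habs.le
      rw [hqRval]
      have hfar := far_ineq (W := c k * (1 + (B.eval z) ^ 2)) (c := c k) (Bz := B.eval z)
        rfl (hB1 z) (hτR0 k) (hcτR k) hτz (hvB k z) (huB z)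
      calc (bR k - z) * (c k * (1 + (B.eval z) ^ 2))
          = (-(z - bR k)) * (c k * (1 + (B.eval z) ^ 2)) := by ring
        _ ≤ u z - v k z := hfar
  -- FACT 5 : to the left of the piece, the tilted gadget is below u
  have fact5 : ∀ (k : Fin (K + 1)) (z : ℝ), 0 < k.val → z < aR k →
      (qLp k).eval z ≤ u z - v k z := by
    intro k z hk hz
    obtain ⟨j, hj1, hj2⟩ := cover z
    have hjk : j.val + 1 ≤ k.val := by
      by_contra hcon
      push_neg at hcon
      have hmon : h k.castSucc ≤ h j.castSucc :=
        hmono.monotone (by simp only [Fin.le_def, Fin.coe_castSucc]; omega)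
      have hza : ((aR k : ℝ) : EReal) ≤ (z : EReal) := by
        rw [← haR k hk]
        exact le_trans hmon hj1
      exact absurd (EReal.coe_le_coe_iff.mp hza) (not_le.mpr hz)
    have hqLval : (qLp k).eval z = (z - aR k) * (c k * (1 + (B.eval z) ^ 2)) := by
      simp only [hqLp_def]
      rw [if_pos hk, eval_mul, hWval]
      simp
    by_cases hcase : j.val + 1 = k.val ∧ 1 ≤ m k * (R k).eval z
    · obtain ⟨hjv, hbr⟩ := hcase
      have hjK : j.val < K := by omega
      have hknval : (knext j).val = min (j.val + 1) K := rfl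
      have hknj : knext j = k := by
        apply Fin.ext
        omega
      have hbRj : bR j = aR k := by
        have hidx : (j.succ : Fin (K + 2)) = k.castSucc := by
          apply Fin.ext
          simp only [Fin.val_succ, Fin.coe_castSucc]
          omega
        simp only [hbR_def, haR_def, hidx]
      obtain ⟨hRj, huj⟩ := hQR j z hj1 hj2
      have hvk : v k z = (Q k).eval z / (R k).eval z := by
        simp only [hv_def]
        unfold gdg
        rw [if_pos hbr]
      have hGbj := hbq j hjK
      have hid2 : (Q j).eval z * (R k).eval z - (Q k).eval z * (R j).eval z
          = (aR k - z) * (bq j).eval z := by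
        have hev : (Gb j).eval z = ((X - C (bR j)) * bq j).eval z := by rw [← hGbj]
        simp only [hGb_def] at hev
        rw [hknj, hbRj] at hev
        have hev2 : (Q k).eval z * (R j).eval z - (Q j).eval z * (R k).eval z
            = (z - aR k) * (bq j).eval z := by simpa using hev
        linear_combination -hev2
      rw [hqLval, huj, hvk]
      have hcL : m k ≤ 2 * c k * δ j := by
        have hkpval : (kprev k).val = k.val - 1 := rfl
        have hkpj : kprev k = j := by
          apply Fin.ext
          omega
        rw [← hkpj]
        exact hcadjL k
      exact adjacent_ineq (zr := aR k) (br := z) rfl (hm k) (hδ j) hbr hRj hid2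
        (hBbq j z) (hB1 z) hcL hz.le
    · have hτz : τL k ≤ aR k - z := by
        rcases not_and_or.mp hcase with hjv | hbr
        · have hj2' : j.val + 2 ≤ k.val := by omega
          have hgap := hgapL_prop k j z hj2' hj2
          calc τL k ≤ gapL k := min_le_right _ _
            _ ≤ aR k - z := by linarith
        · push_neg at hbr
          have habs : ρL k < |z - aR k| := by
            by_contra hle
            push_neg at hle
            exact absurd (hρL k hk z hle) (not_le.mpr hbr)
          rw [abs_of_neg (by linarith : z - aR k < 0)] at habs
          calc τL k ≤ ρL k := min_le_left _ _
            _ ≤ aR k - z := by linarith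
      rw [hqLval]
      have hfar := far_ineq (W := c k * (1 + (B.eval z) ^ 2)) (c := c k) (Bz := B.eval z)
        rfl (hB1 z) (hτL0 k) (hcτL k) hτz (hvB k z) (huB z)
      calc (z - aR k) * (c k * (1 + (B.eval z) ^ 2))
          = (-(aR k - z)) * (c k * (1 + (B.eval z) ^ 2)) := by ring
        _ ≤ u z - v k z := hfar
  -- every w k is below u
  have wle : ∀ (k : Fin (K + 1)) (z : ℝ), w k z ≤ u z := by
    intro k z
    by_cases hin : h k.castSucc ≤ (z : EReal) ∧ (z : EReal) ≤ h k.succ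
    · exact (fact1 k z hin.1 hin.2).le
    · have hminR : min 0 ((qRp k).eval z) ≤ 0 := min_le_left _ _
      have hminL : min 0 ((qLp k).eval z) ≤ 0 := min_le_left _ _
      have hminR' : min 0 ((qRp k).eval z) ≤ (qRp k).eval z := min_le_right _ _
      have hminL' : min 0 ((qLp k).eval z) ≤ (qLp k).eval z := min_le_right _ _
      rcases not_and_or.mp hin with h1 | h2
      · have h1' := not_le.mp h1
        have hk0 : 0 < k.val := by
          rcases Nat.eq_zero_or_pos k.val with h00 | hpos
          · exfalso
            have hcs : k.castSucc = (0 : Fin (K + 2)) :=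
              Fin.ext (by simp [Fin.coe_castSucc, h00])
            rw [hcs, h0] at h1'
            simp at h1'
          · exact hpos
        have hzaR : z < aR k := by
          have h1'' := h1'
          rw [haR k hk0] at h1''
          exact EReal.coe_lt_coe_iff.mp h1''
        have h5 := fact5 k z hk0 hzaR
        simp only [hw_def]
        linarith
      · have h2' := not_le.mp h2
        have hkK : k.val < K := by
          rcases Nat.lt_or_ge k.val K with hlt | hge
          · exact hlt
          · exfalso
            have hkval : k.val = K := by omega
            have hcs : (k.succ : Fin (K + 2)) = Fin.last (K + 1) :=
              Fin.ext (by simp [Fin.val_succ, hkval, Fin.val_last])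
            rw [hcs, hlast] at h2'
            simp at h2'
        have hzbR : bR k < z := by
          have h2'' := h2'
          rw [hbR k hkK] at h2''
          exact EReal.coe_lt_coe_iff.mp h2''
        have h4 := fact4 k z hkK hzbR
        simp only [hw_def]
        linarith
  have hueq : u = fun z => vmax (fun k => w k z) := by
    funext z
    apply le_antisymm
    · obtain ⟨k, hk1, hk2⟩ := cover z
      calc u z = w k z := (fact1 k z hk1 hk2).symm
        _ ≤ vmax (fun k => w k z) := le_vmax (fun k => w k z) k
    · exact vmax_le _ _ fun k => wle k z
  rw [hueq]
  exact InV_vmax w hInVw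


end PGV

end assembly

/-- Every continuous piecewise rational function `u : ℝ → ℝ` is the value function of
some two-player zero-sum polynomial game. -/
theorem value_function_of_continuous_piecewise_rational (u : ℝ → ℝ)
    (hcont : Continuous u) (hpr : PiecewiseRational u) :
    InV u := by
  classical
  obtain ⟨K, h, Q0, R0, hmono, h0, hlast, hpiece⟩ := hpr
  have hlh : ∀ k : Fin (K + 1), h k.castSucc < h k.succ := fun k =>
    hmono Fin.castSucc_lt_succ
  have hex : ∀ k : Fin (K + 1), ∃ (Q' R' : Polynomial ℝ) (δ : ℝ), 0 < δ ∧
      ∀ z : ℝ, h k.castSucc ≤ (z : EReal) → (z : EReal) ≤ h k.succ →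
        δ ≤ R'.eval z ∧ u z = Q'.eval z / R'.eval z := fun k =>
    PGV.normalize_piece u hcont _ _ (hlh k) (Q0 k) (R0 k) (fun z h1 h2 => hpiece k z h1 h2)
  choose Q R δ hδ hQR using hex
  exact PGV.aux_main u hcont K h hmono h0 hlast Q R δ hδ hQR
end

section
/- If u ∈ 𝒱 and w ∈ 𝒱, then max{u, w} ∈ 𝒱; that is, if u and w are value functions of polynomial games, then so is the function z ↦ max{u(z), w(z)}. -/
open Polynomial

namespace InVMaxAux

noncomputable def pay {A B : Type} [Fintype A] [Fintype B] (M : A → B → ℝ)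
    (x : A → ℝ) (y : B → ℝ) : ℝ := ∑ a, ∑ b, x a * M a b * y b

noncomputable def bnd {A B : Type} [Fintype A] [Fintype B] (M : A → B → ℝ) : ℝ :=
  ∑ a, ∑ b, |M a b|

variable {A B : Type} [Fintype A] [Fintype B]

lemma matrixValue_eq (M : A → B → ℝ) :
    matrixValue M = ⨆ x : stdSimplex ℝ A, ⨅ y : stdSimplex ℝ B, pay M x.1 y.1 := rfl

lemma simplex_nonneg {x : A → ℝ} (hx : x ∈ stdSimplex ℝ A) (a : A) : 0 ≤ x a := hx.1 a

lemma simplex_sum {x : A → ℝ} (hx : x ∈ stdSimplex ℝ A) : ∑ a, x a = 1 := hx.2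

lemma coord_le_one {x : A → ℝ} (hx : x ∈ stdSimplex ℝ A) (a : A) : x a ≤ 1 := by
  rw [← hx.2]
  exact Finset.single_le_sum (fun i _ => hx.1 i) (Finset.mem_univ a)

instance instNonemptySimplex [Nonempty A] : Nonempty (stdSimplex ℝ A) := by
  haveI := Classical.decEq A
  exact ⟨⟨_, ite_eq_mem_stdSimplex ℝ (Classical.arbitrary A)⟩⟩

lemma abs_pay_le (M : A → B → ℝ) {x : A → ℝ} {y : B → ℝ}
    (hx : x ∈ stdSimplex ℝ A) (hy : y ∈ stdSimplex ℝ B) : |pay M x y| ≤ bnd M := by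
  unfold pay bnd
  calc |∑ a, ∑ b, x a * M a b * y b| ≤ ∑ a, |∑ b, x a * M a b * y b| :=
        Finset.abs_sum_le_sum_abs _ _
    _ ≤ ∑ a, ∑ b, |x a * M a b * y b| :=
        Finset.sum_le_sum fun a _ => Finset.abs_sum_le_sum_abs _ _
    _ ≤ ∑ a, ∑ b, |M a b| := by
        refine Finset.sum_le_sum fun a _ => Finset.sum_le_sum fun b _ => ?_
        rw [abs_mul, abs_mul, abs_of_nonneg (hx.1 a), abs_of_nonneg (hy.1 b)]
        calc x a * |M a b| * y b ≤ x a * |M a b| :=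
              mul_le_of_le_one_right (mul_nonneg (hx.1 a) (abs_nonneg _)) (coord_le_one hy b)
          _ ≤ |M a b| := mul_le_of_le_one_left (abs_nonneg _) (coord_le_one hx a)

lemma bddBelow_pay (M : A → B → ℝ) {x : A → ℝ} (hx : x ∈ stdSimplex ℝ A) :
    BddBelow (Set.range fun y : stdSimplex ℝ B => pay M x y.1) := by
  refine ⟨-bnd M, ?_⟩
  rintro _ ⟨y, rfl⟩
  exact neg_le_of_abs_le (abs_pay_le M hx y.2)

lemma infPay_le_pay (M : A → B → ℝ) {x : A → ℝ} (hx : x ∈ stdSimplex ℝ A)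
    (y : stdSimplex ℝ B) : (⨅ y : stdSimplex ℝ B, pay M x y.1) ≤ pay M x y.1 :=
  ciInf_le (bddBelow_pay M hx) y

lemma bddAbove_infPay [Nonempty B] (M : A → B → ℝ) :
    BddAbove (Set.range fun x : stdSimplex ℝ A => ⨅ y : stdSimplex ℝ B, pay M x.1 y.1) := by
  refine ⟨bnd M, ?_⟩
  rintro _ ⟨x, rfl⟩
  exact le_trans (infPay_le_pay M x.2 (Classical.arbitrary _))
    (le_of_abs_le (abs_pay_le M x.2 (Classical.arbitrary (stdSimplex ℝ B)).2))

lemma infPay_le_value [Nonempty B] (M : A → B → ℝ) (x : stdSimplex ℝ A) :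
    (⨅ y : stdSimplex ℝ B, pay M x.1 y.1) ≤ matrixValue M := by
  rw [matrixValue_eq]
  exact le_ciSup (bddAbove_infPay M) x

lemma value_le [Nonempty A] (M : A → B → ℝ) {c : ℝ}
    (h : ∀ x : stdSimplex ℝ A, (⨅ y : stdSimplex ℝ B, pay M x.1 y.1) ≤ c) :
    matrixValue M ≤ c := by
  rw [matrixValue_eq]; exact ciSup_le h

end InVMaxAux

namespace InVMaxAux

variable {A₁ A₂ B₁ B₂ : Type} [Fintype A₁] [Fintype A₂] [Fintype B₁] [Fintype B₂]

noncomputable def comb (M₁ : A₁ → B₁ → ℝ) (M₂ : A₂ → B₂ → ℝ) :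
    (A₁ ⊕ A₂) → (B₁ × B₂) → ℝ :=
  fun a b => Sum.elim (fun a₁ => M₁ a₁ b.1) (fun a₂ => M₂ a₂ b.2) a

lemma pay_smul (M : A₁ → B₁ → ℝ) (c : ℝ) (x : A₁ → ℝ) (y : B₁ → ℝ) :
    pay M (fun a => c * x a) y = c * pay M x y := by
  simp only [pay, Finset.mul_sum]
  refine Finset.sum_congr rfl fun a _ => Finset.sum_congr rfl fun b _ => by ring

lemma embed_mem {x₁ : A₁ → ℝ} (hx : x₁ ∈ stdSimplex ℝ A₁) :
    (Sum.elim x₁ (0 : A₂ → ℝ)) ∈ stdSimplex ℝ (A₁ ⊕ A₂) := by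
  constructor
  · rintro (a | a)
    · simpa using hx.1 a
    · simp
  · rw [Fintype.sum_sum_type]
    simp [hx.2]

lemma prod_mem {y₁ : B₁ → ℝ} {y₂ : B₂ → ℝ}
    (h₁ : y₁ ∈ stdSimplex ℝ B₁) (h₂ : y₂ ∈ stdSimplex ℝ B₂) :
    (fun b : B₁ × B₂ => y₁ b.1 * y₂ b.2) ∈ stdSimplex ℝ (B₁ × B₂) := by
  constructor
  · exact fun b => mul_nonneg (h₁.1 b.1) (h₂.1 b.2)
  · rw [Fintype.sum_prod_type, ← Finset.sum_mul_sum]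
    rw [h₁.2, h₂.2, one_mul]

lemma marg_mem {y : B₁ × B₂ → ℝ} (hy : y ∈ stdSimplex ℝ (B₁ × B₂)) :
    (fun b₁ => ∑ b₂, y (b₁, b₂)) ∈ stdSimplex ℝ B₁ := by
  constructor
  · exact fun b₁ => Finset.sum_nonneg fun b₂ _ => hy.1 _
  · rw [← Fintype.sum_prod_type]
    exact hy.2

lemma pay_comb_embed (M₁ : A₁ → B₁ → ℝ) (M₂ : A₂ → B₂ → ℝ)
    (x₁ : A₁ → ℝ) (y : B₁ × B₂ → ℝ) :
    pay (comb M₁ M₂) (Sum.elim x₁ (0 : A₂ → ℝ)) y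
      = pay M₁ x₁ (fun b₁ => ∑ b₂, y (b₁, b₂)) := by
  simp only [pay, comb, Fintype.sum_sum_type, Fintype.sum_prod_type, Sum.elim_inl,
    Sum.elim_inr, Pi.zero_apply, zero_mul, Finset.sum_const_zero, add_zero, Finset.mul_sum]

lemma pay_comb_prod (M₁ : A₁ → B₁ → ℝ) (M₂ : A₂ → B₂ → ℝ)
    (x : A₁ ⊕ A₂ → ℝ) {y₁ : B₁ → ℝ} {y₂ : B₂ → ℝ}
    (h₁ : y₁ ∈ stdSimplex ℝ B₁) (h₂ : y₂ ∈ stdSimplex ℝ B₂) :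
    pay (comb M₁ M₂) x (fun b : B₁ × B₂ => y₁ b.1 * y₂ b.2)
      = pay M₁ (fun a => x (Sum.inl a)) y₁ + pay M₂ (fun a => x (Sum.inr a)) y₂ := by
  simp only [pay, comb, Fintype.sum_sum_type, Sum.elim_inl, Sum.elim_inr]
  congr 1
  · refine Finset.sum_congr rfl fun a _ => ?_
    rw [Fintype.sum_prod_type]
    refine Finset.sum_congr rfl fun b₁ _ => ?_
    have : ∑ b₂, x (Sum.inl a) * M₁ a b₁ * (y₁ b₁ * y₂ b₂)
        = (x (Sum.inl a) * M₁ a b₁ * y₁ b₁) * ∑ b₂, y₂ b₂ := by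
      rw [Finset.mul_sum]; exact Finset.sum_congr rfl fun _ _ => by ring
    rw [this, h₂.2, mul_one]
  · refine Finset.sum_congr rfl fun a _ => ?_
    rw [Fintype.sum_prod_type, Finset.sum_comm]
    refine Finset.sum_congr rfl fun b₂ _ => ?_
    have : ∑ b₁, x (Sum.inr a) * M₂ a b₂ * (y₁ b₁ * y₂ b₂)
        = (x (Sum.inr a) * M₂ a b₂ * y₂ b₂) * ∑ b₁, y₁ b₁ := by
      rw [Finset.mul_sum]; exact Finset.sum_congr rfl fun _ _ => by ring
    rw [this, h₁.2, mul_one]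

end InVMaxAux

namespace InVMaxAux

variable {A₁ A₂ B₁ B₂ : Type} [Fintype A₁] [Fintype A₂] [Fintype B₁] [Fintype B₂]

lemma embed_mem₂ {x₂ : A₂ → ℝ} (hx : x₂ ∈ stdSimplex ℝ A₂) :
    (Sum.elim (0 : A₁ → ℝ) x₂) ∈ stdSimplex ℝ (A₁ ⊕ A₂) := by
  constructor
  · rintro (a | a)
    · simp
    · simpa using hx.1 a
  · rw [Fintype.sum_sum_type]
    simp [hx.2]

lemma marg_mem₂ {y : B₁ × B₂ → ℝ} (hy : y ∈ stdSimplex ℝ (B₁ × B₂)) :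
    (fun b₂ => ∑ b₁, y (b₁, b₂)) ∈ stdSimplex ℝ B₂ := by
  constructor
  · exact fun b₂ => Finset.sum_nonneg fun b₁ _ => hy.1 _
  · rw [Finset.sum_comm, ← Fintype.sum_prod_type]
    exact hy.2

lemma pay_comb_embed₂ (M₁ : A₁ → B₁ → ℝ) (M₂ : A₂ → B₂ → ℝ)
    (x₂ : A₂ → ℝ) (y : B₁ × B₂ → ℝ) :
    pay (comb M₁ M₂) (Sum.elim (0 : A₁ → ℝ) x₂) y
      = pay M₂ x₂ (fun b₂ => ∑ b₁, y (b₁, b₂)) := by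
  simp only [pay, comb, Fintype.sum_sum_type, Sum.elim_inl, Sum.elim_inr, Pi.zero_apply,
    zero_mul, Finset.sum_const_zero, zero_add]
  refine Finset.sum_congr rfl fun a _ => ?_
  rw [Fintype.sum_prod_type, Finset.sum_comm]
  refine Finset.sum_congr rfl fun b₂ _ => ?_
  rw [Finset.mul_sum]

lemma exists_good [Nonempty A₁] [Nonempty B₁] (M : A₁ → B₁ → ℝ) {g : A₁ → ℝ}
    (hg : ∀ a, 0 ≤ g a) {t : ℝ} (ht : ∑ a, g a = t) {ε : ℝ} (hε : 0 < ε) :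
    ∃ y₁ : stdSimplex ℝ B₁, pay M g y₁.1 ≤ t * (matrixValue M + ε) := by
  have ht0 : 0 ≤ t := ht ▸ Finset.sum_nonneg fun a _ => hg a
  rcases eq_or_lt_of_le ht0 with h | h
  · obtain ⟨y₁⟩ : Nonempty (stdSimplex ℝ B₁) := inferInstance
    refine ⟨y₁, ?_⟩
    have hg0 : ∀ a, g a = 0 := fun a =>
      (Finset.sum_eq_zero_iff_of_nonneg (fun i _ => hg i)).1 (ht.trans h.symm) a
        (Finset.mem_univ a)
    rw [← h]
    simp [pay, hg0]
  · set xb : A₁ → ℝ := fun a => g a / t with hxbdef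
    have hxb : xb ∈ stdSimplex ℝ A₁ :=
      ⟨fun a => div_nonneg (hg a) ht0, by
        rw [hxbdef, ← Finset.sum_div, ht, div_self (ne_of_gt h)]⟩
    have hlt : (⨅ y : stdSimplex ℝ B₁, pay M xb y.1) < matrixValue M + ε :=
      lt_of_le_of_lt (infPay_le_value M ⟨xb, hxb⟩) (lt_add_of_pos_right _ hε)
    obtain ⟨y₁, hy₁⟩ := exists_lt_of_ciInf_lt hlt
    refine ⟨y₁, ?_⟩
    have hge : pay M g y₁.1 = t * pay M xb y₁.1 := by
      rw [← pay_smul]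
      congr 1
      funext a
      rw [hxbdef]
      field_simp
    rw [hge]
    exact mul_le_mul_of_nonneg_left hy₁.le ht0

lemma value_comb [Nonempty A₁] [Nonempty A₂] [Nonempty B₁] [Nonempty B₂]
    (M₁ : A₁ → B₁ → ℝ) (M₂ : A₂ → B₂ → ℝ) :
    matrixValue (comb M₁ M₂) = max (matrixValue M₁) (matrixValue M₂) := by
  refine le_antisymm ?_ (max_le ?_ ?_)
  · refine value_le _ fun x => ?_
    refine le_of_forall_pos_le_add fun ε hε => ?_
    obtain ⟨y₁, h₁⟩ := exists_good M₁ (fun a => x.2.1 (Sum.inl a)) rfl hε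
    obtain ⟨y₂, h₂⟩ := exists_good M₂ (fun a => x.2.1 (Sum.inr a)) rfl hε
    have ht0 : (0:ℝ) ≤ ∑ a, x.1 (Sum.inl a) := Finset.sum_nonneg fun a _ => x.2.1 _
    have hs0 : (0:ℝ) ≤ ∑ a, x.1 (Sum.inr a) := Finset.sum_nonneg fun a _ => x.2.1 _
    have hts : (∑ a, x.1 (Sum.inl a)) + (∑ a, x.1 (Sum.inr a)) = 1 := by
      rw [← Fintype.sum_sum_type]
      exact x.2.2
    calc (⨅ y : stdSimplex ℝ (B₁ × B₂), pay (comb M₁ M₂) x.1 y.1)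
        ≤ pay (comb M₁ M₂) x.1 (fun b : B₁ × B₂ => y₁.1 b.1 * y₂.1 b.2) :=
          infPay_le_pay _ x.2 ⟨_, prod_mem y₁.2 y₂.2⟩
      _ = pay M₁ (fun a => x.1 (Sum.inl a)) y₁.1 + pay M₂ (fun a => x.1 (Sum.inr a)) y₂.1 :=
          pay_comb_prod M₁ M₂ x.1 y₁.2 y₂.2
      _ ≤ (∑ a, x.1 (Sum.inl a)) * (matrixValue M₁ + ε)
            + (∑ a, x.1 (Sum.inr a)) * (matrixValue M₂ + ε) := add_le_add h₁ h₂
      _ ≤ (∑ a, x.1 (Sum.inl a)) * (max (matrixValue M₁) (matrixValue M₂) + ε)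
            + (∑ a, x.1 (Sum.inr a)) * (max (matrixValue M₁) (matrixValue M₂) + ε) := by
          gcongr
          · exact le_max_left _ _
          · exact le_max_right _ _
      _ = max (matrixValue M₁) (matrixValue M₂) + ε := by
          rw [← add_mul, hts, one_mul]
  · refine value_le _ fun x₁ => ?_
    refine le_trans (le_ciInf fun y => ?_)
      (infPay_le_value (comb M₁ M₂) ⟨_, embed_mem x₁.2⟩)
    rw [pay_comb_embed]
    exact infPay_le_pay M₁ x₁.2 ⟨_, marg_mem y.2⟩
  · refine value_le _ fun x₂ => ?_
    refine le_trans (le_ciInf fun y => ?_)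
      (infPay_le_value (comb M₁ M₂) ⟨_, embed_mem₂ x₂.2⟩)
    rw [pay_comb_embed₂]
    exact infPay_le_pay M₂ x₂.2 ⟨_, marg_mem₂ y.2⟩

end InVMaxAux

/-- If `u` and `w` are value functions of polynomial games, then so is
`z ↦ max (u z) (w z)`. -/
theorem InV.max (u w : ℝ → ℝ) (hu : InV u) (hw : InV w) :
    InV (fun z => max (u z) (w z)) := by
  obtain ⟨A₁, B₁, iA₁, iB₁, hA₁, hB₁, G₁, hG₁⟩ := hu
  obtain ⟨A₂, B₂, iA₂, iB₂, hA₂, hB₂, G₂, hG₂⟩ := hw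
  letI := iA₁; letI := iA₂; letI := iB₁; letI := iB₂
  haveI := hA₁; haveI := hA₂; haveI := hB₁; haveI := hB₂
  refine ⟨A₁ ⊕ A₂, B₁ × B₂, inferInstance, inferInstance, inferInstance, inferInstance,
    fun a b => Sum.elim (fun a₁ => G₁ a₁ b.1) (fun a₂ => G₂ a₂ b.2) a, fun z => ?_⟩
  have heq : (fun (a : A₁ ⊕ A₂) (b : B₁ × B₂) =>
        (Sum.elim (fun a₁ => G₁ a₁ b.1) (fun a₂ => G₂ a₂ b.2) a).eval z)
      = InVMaxAux.comb (fun a b => (G₁ a b).eval z) (fun a b => (G₂ a b).eval z) := by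
    funext a b
    cases a <;> rfl
  rw [heq, InVMaxAux.value_comb]
  exact congrArg₂ Max.max (hG₁ z) (hG₂ z)
end
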